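/- arXiv:1807.09118 — 3 statements merged into one kernel-verified Lean document; each statement's English description precedes it below -/
import Mathlib

section
/- Through each point of type E of PG(3,q) there pass exactly: one line of L₃', q−1 lines of L₄', 2(q−1) lines of L₄, and no line of L₁, L₂, L₃, L₁' or L₂'. -/
/-!
Common setting: `PG(3,q)` as the lattice of subspaces of `V = GF(q)⁴`;
the pencil of quadrics `Q_λ : x₁x₃ - x₂² + λx₄² = 0`, the plane `π : x₄ = 0`,
the conic `C = Q_λ ∩ π`, and the group `G ≤ PGL(4,q)` induced by the matrices
`M(a,b,c,d)`.
-/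

/-- The quadratic form `F_λ(x) = x₁x₃ - x₂² + λx₄²` on `V = F⁴`. -/
def Fq (F : Type) [Field F] (lam : F) (v : Fin 4 → F) : F :=
  v 0 * v 2 - v 1 ^ 2 + lam * v 3 ^ 2

/-- The matrix `M(a,b,c,d)`. -/
def Mmat (F : Type) [Field F] (a b c d : F) : Matrix (Fin 4) (Fin 4) F :=
  !![a^2, 2*a*c, c^2, 0;
     a*b, a*d + b*c, c*d, 0;
     b^2, 2*b*d, d^2, 0;
     0,   0,       0,   a*d - b*c]

/-- A point of `PG(3,q)`: a 1-dimensional subspace of `F⁴`. -/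
def isPoint (F : Type) [Field F] (P : Submodule F (Fin 4 → F)) : Prop :=
  Module.finrank F P = 1

/-- A line of `PG(3,q)`: a 2-dimensional subspace of `F⁴`. -/
def isLine (F : Type) [Field F] (l : Submodule F (Fin 4 → F)) : Prop :=
  Module.finrank F l = 2

/-- A plane of `PG(3,q)`: a 3-dimensional subspace of `F⁴`. -/
def isPlane (F : Type) [Field F] (s : Submodule F (Fin 4 → F)) : Prop :=
  Module.finrank F s = 3

/-- The quadric `Q_λ`, as the set of points on which `F_λ` vanishes. -/
def quadric (F : Type) [Field F] (lam : F) : Set (Submodule F (Fin 4 → F)) :=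
  {P | isPoint F P ∧ ∀ v ∈ P, Fq F lam v = 0}

/-- The plane `π : x₄ = 0`. -/
def planePi (F : Type) [Field F] : Submodule F (Fin 4 → F) where
  carrier := {v | v 3 = 0}
  add_mem' := by
    intro a b ha hb
    simp only [Set.mem_setOf_eq, Pi.add_apply] at *
    rw [ha, hb, add_zero]
  zero_mem' := by simp
  smul_mem' := by
    intro c a ha
    simp only [Set.mem_setOf_eq, Pi.smul_apply, smul_eq_mul] at *
    rw [ha, mul_zero]

/-- The point `U₄ = ⟨(0,0,0,1)⟩`. -/
def pointU4 (F : Type) [Field F] : Submodule F (Fin 4 → F) :=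
  Submodule.span F {(Pi.single 3 1 : Fin 4 → F)}

/-- The conic `C = Q_λ ∩ π` (independent of `λ`). -/
def conicC (F : Type) [Field F] : Set (Submodule F (Fin 4 → F)) :=
  {P | P ∈ quadric F 0 ∧ P ≤ planePi F}

/-- The set of points of the quadric `Q_λ` lying on a subspace `l`. -/
def qpts (F : Type) [Field F] (lam : F) (l : Submodule F (Fin 4 → F)) :
    Set (Submodule F (Fin 4 → F)) :=
  {P | P ∈ quadric F lam ∧ P ≤ l}

/-- A line is tangent to `Q_λ` if it contains exactly one of its points. -/
def tangentTo (F : Type) [Field F] (l : Submodule F (Fin 4 → F)) (lam : F) : Prop :=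
  (qpts F lam l).ncard = 1

/-- A line is secant to `Q_λ` if it contains exactly two of its points. -/
def secantTo (F : Type) [Field F] (l : Submodule F (Fin 4 → F)) (lam : F) : Prop :=
  (qpts F lam l).ncard = 2

/-- A line is external to `Q_λ` if it contains none of its points. -/
def externalTo (F : Type) [Field F] (l : Submodule F (Fin 4 → F)) (lam : F) : Prop :=
  (qpts F lam l).ncard = 0

/-- `L₁`: lines of `π` tangent to `C`. -/
def lineL1 (F : Type) [Field F] : Set (Submodule F (Fin 4 → F)) :=
  {l | isLine F l ∧ l ≤ planePi F ∧ ({P | P ∈ conicC F ∧ P ≤ l}).ncard = 1}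

/-- `L₂`: lines of `π` external to `C`. -/
def lineL2 (F : Type) [Field F] : Set (Submodule F (Fin 4 → F)) :=
  {l | isLine F l ∧ l ≤ planePi F ∧ ({P | P ∈ conicC F ∧ P ≤ l}).ncard = 0}

/-- `L₃`: lines of `π` secant to `C`. -/
def lineL3 (F : Type) [Field F] : Set (Submodule F (Fin 4 → F)) :=
  {l | isLine F l ∧ l ≤ planePi F ∧ ({P | P ∈ conicC F ∧ P ≤ l}).ncard = 2}

/-- `E`: the external points of `C` in `π` (on exactly two tangent lines of `C`). -/
def setE (F : Type) [Field F] : Set (Submodule F (Fin 4 → F)) :=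
  {P | isPoint F P ∧ P ≤ planePi F ∧ P ∉ conicC F ∧
    ({m | m ∈ lineL1 F ∧ P ≤ m}).ncard = 2}

/-- `I`: the internal points of `C` in `π` (on no tangent line of `C`). -/
def setI (F : Type) [Field F] : Set (Submodule F (Fin 4 → F)) :=
  {P | isPoint F P ∧ P ≤ planePi F ∧ P ∉ conicC F ∧
    ({m | m ∈ lineL1 F ∧ P ≤ m}).ncard = 0}

/-- `L₁'`: the lines through `U₄` contained in the cone `Q₀`. -/
def lineL1' (F : Type) [Field F] : Set (Submodule F (Fin 4 → F)) :=
  {l | isLine F l ∧ pointU4 F ≤ l ∧ ∀ v ∈ l, Fq F 0 v = 0}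

/-- `L₂'`: the lines through `U₄` meeting `π` in a point of `I`. -/
def lineL2' (F : Type) [Field F] : Set (Submodule F (Fin 4 → F)) :=
  {l | isLine F l ∧ pointU4 F ≤ l ∧ (l ⊓ planePi F) ∈ setI F}

/-- `L₃'`: the lines through `U₄` meeting `π` in a point of `E`. -/
def lineL3' (F : Type) [Field F] : Set (Submodule F (Fin 4 → F)) :=
  {l | isLine F l ∧ pointU4 F ≤ l ∧ (l ⊓ planePi F) ∈ setE F}

/-- `L₄`: the lines not through `U₄`, tangent to the cone `Q₀`, meeting `π` in a
point of `E`. -/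
def lineL4 (F : Type) [Field F] : Set (Submodule F (Fin 4 → F)) :=
  {l | isLine F l ∧ ¬ pointU4 F ≤ l ∧ tangentTo F l 0 ∧ (l ⊓ planePi F) ∈ setE F}

/-- `L₄'`: the lines meeting `π` in exactly one point, lying on `C`, and secant to
every quadric `Q_λ`. -/
def lineL4' (F : Type) [Field F] : Set (Submodule F (Fin 4 → F)) :=
  {l | isLine F l ∧ (l ⊓ planePi F) ∈ conicC F ∧ ∀ lam : F, secantTo F l lam}

/-- The collineations of `PG(3,q)` induced by the matrices `M(a,b,c,d)`,
`ad - bc ≠ 0`, acting on subspaces. -/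
def Gcoll (F : Type) [Field F] : Set (Equiv.Perm (Submodule F (Fin 4 → F))) :=
  {σ | ∃ a b c d : F, a * d - b * c ≠ 0 ∧
    ∃ e : (Fin 4 → F) ≃ₗ[F] (Fin 4 → F),
      (∀ v, e v = (Mmat F a b c d).mulVec v) ∧
      ∀ W : Submodule F (Fin 4 → F), σ W = W.map e.toLinearMap}

/-- The group `G ≃ PGL(2,q)`, as a group of collineations of `PG(3,q)`. -/
def G (F : Type) [Field F] : Subgroup (Equiv.Perm (Submodule F (Fin 4 → F))) :=
  Subgroup.closure (Gcoll F)

/-- `A = L₁' ∪ L₂' ∪ L₃ ∪ L₄'`. -/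
def setA (F : Type) [Field F] : Set (Submodule F (Fin 4 → F)) :=
  lineL1' F ∪ lineL2' F ∪ lineL3 F ∪ lineL4' F

/-- `B = L₁ ∪ L₂ ∪ L₃' ∪ L₄`. -/
def setB (F : Type) [Field F] : Set (Submodule F (Fin 4 → F)) :=
  lineL1 F ∪ lineL2 F ∪ lineL3' F ∪ lineL4 F

/-- `S_ℓ`: the lines of `S` meeting the line `ℓ` (in at least a point). -/
def linesMeeting (F : Type) [Field F] (S : Set (Submodule F (Fin 4 → F)))
    (l : Submodule F (Fin 4 → F)) : Set (Submodule F (Fin 4 → F)) :=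
  {r | r ∈ S ∧ r ⊓ l ≠ ⊥}

/-- A spread of `PG(3,q)`: `q² + 1` pairwise disjoint lines. -/
def isSpread (F : Type) [Field F] (q : ℕ) (S : Set (Submodule F (Fin 4 → F))) : Prop :=
  (∀ l ∈ S, isLine F l) ∧ S.ncard = q ^ 2 + 1 ∧
    ∀ l ∈ S, ∀ l' ∈ S, l ≠ l' → l ⊓ l' = ⊥

/-- A Cameron–Liebler line class with parameter `x`: a set of lines meeting every
spread in exactly `x` lines. -/
def isCameronLiebler (F : Type) [Field F] (q x : ℕ)
    (L : Set (Submodule F (Fin 4 → F))) : Prop :=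
  (∀ l ∈ L, isLine F l) ∧ ∀ S, isSpread F q S → (L ∩ S).ncard = x

/-- `O_n`: the points off `Q_λ` at which `F_λ` evaluates to a nonsquare. -/
def setOn (F : Type) [Field F] (lam : F) : Set (Submodule F (Fin 4 → F)) :=
  {P | isPoint F P ∧ ∀ v ∈ P, v ≠ 0 → ¬ IsSquare (Fq F lam v)}

/-- `O_s`: the points off `Q_λ` at which `F_λ` evaluates to a nonzero square. -/
def setOs (F : Type) [Field F] (lam : F) : Set (Submodule F (Fin 4 → F)) :=
  {P | isPoint F P ∧ ∀ v ∈ P, v ≠ 0 → Fq F lam v ≠ 0 ∧ IsSquare (Fq F lam v)}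

/-- `T`: the tangent lines to `Q_λ` all of whose points off `Q_λ` lie in `O_n`. -/
def setT (F : Type) [Field F] (lam : F) : Set (Submodule F (Fin 4 → F)) :=
  {l | isLine F l ∧ tangentTo F l lam ∧
    ∀ P, isPoint F P → P ≤ l → P ∉ quadric F lam → P ∈ setOn F lam}

/-- `S`: the secant lines to `Q_λ`. -/
def setS (F : Type) [Field F] (lam : F) : Set (Submodule F (Fin 4 → F)) :=
  {l | isLine F l ∧ secantTo F l lam}

/-- The symmetric bilinear form obtained by polarizing `F_λ`. -/
def polarFq (F : Type) [Field F] (lam : F) (u v : Fin 4 → F) : F :=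
  Fq F lam (u + v) - Fq F lam u - Fq F lam v

theorem polarFq_eq (F : Type) [Field F] (lam : F) (u v : Fin 4 → F) :
    polarFq F lam u v =
      u 0 * v 2 + u 2 * v 0 - 2 * (u 1 * v 1) + lam * (2 * (u 3 * v 3)) := by
  simp only [polarFq, Fq, Pi.add_apply]
  ring

/-- `W^{⊥_λ}`: the orthogonal complement of a subspace `W` with respect to the
symmetric bilinear form obtained by polarizing `F_λ`. -/
def perpLam (F : Type) [Field F] (lam : F) (W : Submodule F (Fin 4 → F)) :
    Submodule F (Fin 4 → F) where
  carrier := {v | ∀ u ∈ W, polarFq F lam u v = 0}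
  add_mem' := by
    intro x y hx hy u hu
    have h1 := hx u hu
    have h2 := hy u hu
    rw [polarFq_eq] at h1 h2 ⊢
    simp only [Pi.add_apply]
    linear_combination h1 + h2
  zero_mem' := by
    intro u hu
    rw [polarFq_eq]
    simp
  smul_mem' := by
    intro c x hx u hu
    have h1 := hx u hu
    rw [polarFq_eq] at h1 ⊢
    simp only [Pi.smul_apply, smul_eq_mul]
    linear_combination c * h1

namespace St11
open Submodule

variable {F : Type} [Field F]

/-- abbreviation for projective point -/
abbrev pt (F : Type) [Field F] (v : Fin 4 → F) : Submodule F (Fin 4 → F) :=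
  Submodule.span F {v}

lemma mem_pi_iff {v : Fin 4 → F} : v ∈ planePi F ↔ v 3 = 0 := Iff.rfl

lemma pt_le_iff {v : Fin 4 → F} {W : Submodule F (Fin 4 → F)} : pt F v ≤ W ↔ v ∈ W :=
  Submodule.span_singleton_le_iff_mem v W

lemma mem_pt_self (v : Fin 4 → F) : v ∈ pt F v := Submodule.mem_span_singleton_self v

lemma isPoint_pt {v : Fin 4 → F} (hv : v ≠ 0) : isPoint F (pt F v) :=
  finrank_span_singleton hv

lemma point_rep {P : Submodule F (Fin 4 → F)} (h : isPoint F P) :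
    ∃ v : Fin 4 → F, v ≠ 0 ∧ P = pt F v := by
  have h' : Module.rank F P = 1 := Module.rank_eq_one_iff_finrank_eq_one.mpr h
  obtain ⟨v, hvP, hv0, hle⟩ := (rank_submodule_eq_one_iff P).mp h'
  exact ⟨v, hv0, le_antisymm hle ((Submodule.span_singleton_le_iff_mem v P).mpr hvP)⟩

lemma pt_eq_pt_iff {u v : Fin 4 → F} :
    pt F u = pt F v ↔ ∃ γ : F, γ ≠ 0 ∧ v = γ • u := by
  rw [Submodule.span_singleton_eq_span_singleton]
  constructor
  · rintro ⟨c, rfl⟩; exact ⟨c, c.ne_zero, rfl⟩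
  · rintro ⟨γ, hγ, rfl⟩; exact ⟨Units.mk0 γ hγ, rfl⟩

lemma pt_smul {v : Fin 4 → F} {γ : F} (hγ : γ ≠ 0) : pt F (γ • v) = pt F v := by
  refine pt_eq_pt_iff.mpr ⟨γ⁻¹, inv_ne_zero hγ, ?_⟩
  rw [smul_smul, inv_mul_cancel₀ hγ, one_smul]

lemma Fq_smul (lam c : F) (v : Fin 4 → F) : Fq F lam (c • v) = c ^ 2 * Fq F lam v := by
  simp only [Fq, Pi.smul_apply, smul_eq_mul]; ring

lemma Fq_expand (lam α β : F) (u v : Fin 4 → F) :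
    Fq F lam (α • u + β • v) =
      α ^ 2 * Fq F lam u + α * β * polarFq F lam u v + β ^ 2 * Fq F lam v := by
  rw [polarFq_eq]
  simp only [Fq, Pi.add_apply, Pi.smul_apply, smul_eq_mul]; ring

lemma polar_symm (lam : F) (u v : Fin 4 → F) : polarFq F lam u v = polarFq F lam v u := by
  rw [polarFq_eq, polarFq_eq]; ring

/-- parametrization of the conic -/
def cvec (F : Type) [Field F] : F ⊕ Unit → (Fin 4 → F)
  | Sum.inl t => ![1, t, t ^ 2, 0]
  | Sum.inr _ => ![0, 0, 1, 0]

/-- the vector e₄ -/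
def e4 (F : Type) [Field F] : Fin 4 → F := ![0, 0, 0, 1]

lemma e4_ne_zero : e4 F ≠ 0 := by
  intro h; have := congr_fun h 3; simp [e4] at this

lemma pointU4_eq : pointU4 F = pt F (e4 F) := by
  unfold pointU4
  congr 1
  have : (Pi.single 3 1 : Fin 4 → F) = e4 F := by
    funext i; fin_cases i <;> simp [e4, Pi.single, Function.update]
  rw [this]

lemma cvec3 (x : F ⊕ Unit) : cvec F x 3 = 0 := by cases x <;> simp [cvec]

lemma cvec_ne_zero (x : F ⊕ Unit) : cvec F x ≠ 0 := by
  intro h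
  cases x
  · have := congr_fun h 0; simp [cvec] at this
  · have := congr_fun h 2; simp [cvec] at this

lemma Fq_cvec (lam : F) (x : F ⊕ Unit) : Fq F lam (cvec F x) = 0 := by
  cases x <;> simp [cvec, Fq]

lemma cvec_smul {x y : F ⊕ Unit} {γ : F} (h : cvec F x = γ • cvec F y) :
    x = y ∧ γ = 1 := by
  cases x <;> cases y
  case inl.inl t t' =>
    have h0 : (1 : F) = γ * 1 := by simpa [cvec] using congr_fun h 0
    have hγ : γ = 1 := by rw [mul_one] at h0; exact h0.symm
    subst hγ
    have h1 : t = 1 * t' := by simpa [cvec] using congr_fun h 1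
    rw [one_mul] at h1
    exact ⟨by rw [h1], rfl⟩
  case inl.inr t u =>
    have h0 : (1 : F) = γ * 0 := by simpa [cvec] using congr_fun h 0
    rw [mul_zero] at h0; exact absurd h0 one_ne_zero
  case inr.inl u t =>
    have h0 : (0 : F) = γ * 1 := by simpa [cvec] using congr_fun h 0
    have h2 : (1 : F) = γ * t ^ 2 := by simpa [cvec] using congr_fun h 2
    rw [mul_one] at h0
    rw [← h0, zero_mul] at h2
    exact absurd h2 one_ne_zero
  case inr.inr u u' =>
    have h2 : (1 : F) = γ * 1 := by simpa [cvec] using congr_fun h 2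
    rw [mul_one] at h2
    exact ⟨by cases u; cases u'; rfl, h2.symm⟩

lemma pt_cvec_inj {x y : F ⊕ Unit} (h : pt F (cvec F x) = pt F (cvec F y)) : x = y := by
  obtain ⟨γ, hγ, hh⟩ := pt_eq_pt_iff.mp h
  exact ((cvec_smul hh).1).symm

lemma quadric_pt_iff {v : Fin 4 → F} (hv : v ≠ 0) (lam : F) :
    pt F v ∈ quadric F lam ↔ Fq F lam v = 0 := by
  constructor
  · intro h; exact h.2 v (mem_pt_self v)
  · intro h
    refine ⟨isPoint_pt hv, fun w hw => ?_⟩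
    obtain ⟨c, rfl⟩ := Submodule.mem_span_singleton.mp hw
    rw [Fq_smul, h, mul_zero]

lemma conic_pt_iff {v : Fin 4 → F} (hv : v ≠ 0) :
    pt F v ∈ conicC F ↔ (v 3 = 0 ∧ Fq F 0 v = 0) := by
  constructor
  · intro h
    exact ⟨h.2 (mem_pt_self v), h.1.2 v (mem_pt_self v)⟩
  · rintro ⟨h3, hF⟩
    exact ⟨(quadric_pt_iff hv 0).mpr hF, pt_le_iff.mpr h3⟩

lemma conic_cvec (x : F ⊕ Unit) : pt F (cvec F x) ∈ conicC F :=
  (conic_pt_iff (cvec_ne_zero x)).mpr ⟨cvec3 x, Fq_cvec 0 x⟩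

lemma conic_rep {P : Submodule F (Fin 4 → F)} (h : P ∈ conicC F) :
    ∃ x, P = pt F (cvec F x) := by
  obtain ⟨v, hv, rfl⟩ := point_rep h.1.1
  have h3 : v 3 = 0 := h.2 (mem_pt_self v)
  have hF : Fq F 0 v = 0 := h.1.2 v (mem_pt_self v)
  simp only [Fq, zero_mul, add_zero] at hF
  by_cases h0 : v 0 = 0
  · have h1 : v 1 = 0 := by
      have hsq : v 1 ^ 2 = 0 := by linear_combination -hF + v 2 * h0
      exact pow_eq_zero_iff (two_ne_zero) |>.mp hsq
    have h2 : v 2 ≠ 0 := by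
      intro h2
      apply hv; funext i; fin_cases i <;> simp [h0, h1, h2, h3]
    refine ⟨Sum.inr (), pt_eq_pt_iff.mpr ⟨(v 2)⁻¹, inv_ne_zero h2, ?_⟩⟩
    funext i
    fin_cases i <;> simp [cvec, Pi.smul_apply, h0, h1, h3]
    exact (inv_mul_cancel₀ h2).symm
  · refine ⟨Sum.inl (v 1 / v 0), ?_⟩
    refine (pt_eq_pt_iff.mpr ⟨(v 0)⁻¹, inv_ne_zero h0, ?_⟩)
    funext i
    fin_cases i <;> simp [cvec, Pi.smul_apply, h3]
    · exact (inv_mul_cancel₀ h0).symm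
    · rw [div_eq_inv_mul]
    · field_simp
      linear_combination (-1 : F) * hF

/-! ### lines -/

lemma span_pair_comm (u v : Fin 4 → F) :
    Submodule.span F {u, v} = Submodule.span F {v, u} := by
  rw [Set.pair_comm]

lemma sup_pt_eq_span_pair (u v : Fin 4 → F) :
    pt F u ⊔ pt F v = Submodule.span F {u, v} := by
  rw [← Submodule.span_union, Set.singleton_union]

lemma indep_pair_iff {u v : Fin 4 → F} :
    LinearIndependent F ![u, v] ↔ ∀ s t : F, s • u + t • v = 0 → s = 0 ∧ t = 0 :=
  LinearIndependent.pair_iff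

lemma indep_symm {u v : Fin 4 → F} (h : LinearIndependent F ![u, v]) :
    LinearIndependent F ![v, u] := by
  rw [indep_pair_iff] at h ⊢
  intro s t hst
  have := h t s (by rw [add_comm]; exact hst)
  exact ⟨this.2, this.1⟩

/-- linear independence from different values of the quadratic form -/
lemma indep_Fq {lam : F} {u v : Fin 4 → F} (hu : u ≠ 0) (h0 : Fq F lam u = 0)
    (h1 : Fq F lam v ≠ 0) : LinearIndependent F ![u, v] := by
  rw [indep_pair_iff]
  intro s t hst
  have ht : t = 0 := by
    have hv : t • v = (-s) • u := by
      rw [neg_smul, ← sub_eq_zero, sub_neg_eq_add, add_comm]; exact hst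
    have := congrArg (Fq F lam) hv
    rw [Fq_smul, Fq_smul, h0, mul_zero] at this
    rcases mul_eq_zero.mp this with h | h
    · exact pow_eq_zero_iff two_ne_zero |>.mp h
    · exact absurd h h1
  subst ht
  simp only [zero_smul, add_zero, smul_eq_zero] at hst
  rcases hst with h | h
  · exact ⟨h, rfl⟩
  · exact absurd h hu

lemma pt_ne_of_indep {u v : Fin 4 → F} (h : LinearIndependent F ![u, v]) :
    pt F u ≠ pt F v := by
  intro he
  obtain ⟨γ, hγ, rfl⟩ := pt_eq_pt_iff.mp he
  have : (-γ) • u + (1 : F) • (γ • u) = 0 := by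
    funext i; simp only [Pi.add_apply, Pi.smul_apply, smul_eq_mul, Pi.zero_apply]; ring
  exact one_ne_zero (indep_pair_iff.mp h _ _ this).2

lemma isLine_span_pair {u v : Fin 4 → F} (h : LinearIndependent F ![u, v]) :
    isLine F (Submodule.span F {u, v}) := by
  have h2 := finrank_span_eq_card h
  unfold isLine
  rw [show ({u, v} : Set (Fin 4 → F)) = Set.range ![u, v] by
    rw [Matrix.range_cons_cons_empty]]
  rw [h2]; rfl

lemma line_eq_of_le {l m : Submodule F (Fin 4 → F)} (hl : isLine F l) (hm : isLine F m)
    (h : m ≤ l) : m = l := by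
  apply Submodule.eq_of_le_of_finrank_le h
  rw [show Module.finrank F l = 2 from hl, show Module.finrank F m = 2 from hm]

lemma span_pair_le {u v : Fin 4 → F} {W : Submodule F (Fin 4 → F)} (hu : u ∈ W)
    (hv : v ∈ W) : Submodule.span F {u, v} ≤ W := by
  rw [Submodule.span_le]
  rintro x (rfl | rfl) <;> assumption

lemma mem_span_pair_left (u v : Fin 4 → F) : u ∈ Submodule.span F {u, v} :=
  Submodule.subset_span (Set.mem_insert u {v})

lemma mem_span_pair_right (u v : Fin 4 → F) : v ∈ Submodule.span F {u, v} :=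
  Submodule.subset_span (Set.mem_insert_of_mem u rfl)

/-- intersection of a line with the plane π -/
lemma span_pair_inf_pi {p : Fin 4 → F} (hp : p 3 = 1) (z : Fin 4 → F) :
    Submodule.span F {p, z} ⊓ planePi F = pt F (z - z 3 • p) := by
  apply le_antisymm
  · rintro x ⟨hx1, hx2⟩
    obtain ⟨a, b, rfl⟩ := Submodule.mem_span_pair.mp hx1
    have h3 : a + b * z 3 = 0 := by
      have := (mem_pi_iff).mp hx2
      simpa [hp] using this
    have ha : a = -(b * z 3) := by linear_combination h3
    apply Submodule.mem_span_singleton.mpr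
    refine ⟨b, ?_⟩
    rw [ha]; funext i
    simp only [Pi.add_apply, Pi.smul_apply, Pi.sub_apply, smul_eq_mul]
    ring
  · rw [pt_le_iff]
    constructor
    · exact Submodule.sub_mem _ (mem_span_pair_right p z)
        (Submodule.smul_mem _ _ (mem_span_pair_left p z))
    · show (z - z 3 • p) 3 = 0
      simp [hp]

lemma span_pair_smul {p z : Fin 4 → F} {γ : F} (hγ : γ ≠ 0) :
    Submodule.span F {p, γ • z} = Submodule.span F {p, z} := by
  apply le_antisymm
  · exact span_pair_le (mem_span_pair_left p z) (Submodule.smul_mem _ _ (mem_span_pair_right p z))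
  · refine span_pair_le (mem_span_pair_left p _) ?_
    have hm : γ⁻¹ • (γ • z) ∈ Submodule.span F {p, γ • z} :=
      Submodule.smul_mem _ _ (mem_span_pair_right p _)
    rwa [smul_smul, inv_mul_cancel₀ hγ, one_smul] at hm

/-! ### points of quadrics on lines -/

lemma qpts_single {p z : Fin 4 → F} (lam : F) (hFp : Fq F lam p ≠ 0)
    (hFz : Fq F lam z = 0) (hz : z ≠ 0) (hpol : polarFq F lam p z = 0) :
    qpts F lam (Submodule.span F {p, z}) = {pt F z} := by
  ext Q
  simp only [qpts, Set.mem_setOf_eq, Set.mem_singleton_iff]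
  constructor
  · rintro ⟨hQq, hQle⟩
    obtain ⟨v, hv, rfl⟩ := point_rep hQq.1
    have hvl : v ∈ Submodule.span F {p, z} := hQle (mem_pt_self v)
    obtain ⟨a, b, rfl⟩ := Submodule.mem_span_pair.mp hvl
    have hFv : Fq F lam (a • p + b • z) = 0 := hQq.2 _ (mem_pt_self _)
    rw [Fq_expand, hFz, hpol] at hFv
    have ha : a = 0 := by
      have h2 : a ^ 2 * Fq F lam p = 0 := by linear_combination hFv
      rcases mul_eq_zero.mp h2 with h | h
      · exact pow_eq_zero_iff two_ne_zero |>.mp h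
      · exact absurd h hFp
    subst ha
    have hb : b ≠ 0 := by
      intro hb; subst hb; simp at hv
    rw [zero_smul, zero_add, pt_smul hb]
  · rintro rfl
    exact ⟨(quadric_pt_iff hz lam).mpr hFz, pt_le_iff.mpr (mem_span_pair_right p z)⟩

lemma tangent_of {p z : Fin 4 → F} (lam : F) (hFp : Fq F lam p ≠ 0)
    (hFz : Fq F lam z = 0) (hz : z ≠ 0) (hpol : polarFq F lam p z = 0) :
    tangentTo F (Submodule.span F {p, z}) lam := by
  unfold tangentTo
  rw [qpts_single lam hFp hFz hz hpol, Set.ncard_singleton]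

lemma qpts_pair {p z : Fin 4 → F} (lam : F) (hFz : Fq F lam z = 0) (hz : z ≠ 0)
    (hind : LinearIndependent F ![z, p]) (hpol : polarFq F lam p z ≠ 0) :
    qpts F lam (Submodule.span F {p, z}) =
      {pt F z, pt F (polarFq F lam p z • p - Fq F lam p • z)} := by
  set ρ := polarFq F lam p z with hρ
  set w := ρ • p - Fq F lam p • z with hw
  have hwne : w ≠ 0 := by
    intro h
    have heq : (-(Fq F lam p)) • z + ρ • p = 0 := by
      rw [← h, hw]; funext i
      simp only [Pi.add_apply, Pi.smul_apply, Pi.sub_apply, smul_eq_mul]; ring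
    exact hpol (indep_pair_iff.mp hind _ _ heq).2
  have hFw : Fq F lam w = 0 := by
    have hww : w = ρ • p + (-(Fq F lam p)) • z := by
      rw [hw]; funext i
      simp only [Pi.add_apply, Pi.smul_apply, Pi.sub_apply, smul_eq_mul]; ring
    rw [hww, Fq_expand, hFz]
    ring
  have hwl : w ∈ Submodule.span F {p, z} :=
    Submodule.sub_mem _ (Submodule.smul_mem _ _ (mem_span_pair_left p z))
      (Submodule.smul_mem _ _ (mem_span_pair_right p z))
  ext Q
  simp only [qpts, Set.mem_setOf_eq, Set.mem_insert_iff, Set.mem_singleton_iff]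
  constructor
  · rintro ⟨hQq, hQle⟩
    obtain ⟨v, hv, rfl⟩ := point_rep hQq.1
    have hvl : v ∈ Submodule.span F {p, z} := hQle (mem_pt_self v)
    obtain ⟨a, b, rfl⟩ := Submodule.mem_span_pair.mp hvl
    have hFv : Fq F lam (a • p + b • z) = 0 := hQq.2 _ (mem_pt_self _)
    rw [Fq_expand, hFz] at hFv
    by_cases ha : a = 0
    · subst ha
      have hb : b ≠ 0 := by intro hb; subst hb; simp at hv
      left; rw [zero_smul, zero_add, pt_smul hb]
    · right
      have hbρ : b * ρ = -(a * Fq F lam p) := by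
        have h2 : a * (a * Fq F lam p + b * ρ) = 0 := by linear_combination hFv
        rcases mul_eq_zero.mp h2 with h | h
        · exact absurd h ha
        · linear_combination h
      have hvv : ρ • (a • p + b • z) = a • w := by
        rw [hw]; funext i
        simp only [Pi.add_apply, Pi.smul_apply, Pi.sub_apply, smul_eq_mul]
        linear_combination (z i) * hbρ
      calc pt F (a • p + b • z) = pt F (ρ • (a • p + b • z)) := (pt_smul hpol).symm
        _ = pt F (a • w) := by rw [hvv]
        _ = pt F w := pt_smul ha
  · rintro (rfl | rfl)
    · exact ⟨(quadric_pt_iff hz lam).mpr hFz, pt_le_iff.mpr (mem_span_pair_right p z)⟩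
    · exact ⟨(quadric_pt_iff hwne lam).mpr hFw, pt_le_iff.mpr hwl⟩

lemma secant_of {p z : Fin 4 → F} (lam : F) (hFz : Fq F lam z = 0) (hz : z ≠ 0)
    (hind : LinearIndependent F ![z, p]) (hpol : polarFq F lam p z ≠ 0) :
    secantTo F (Submodule.span F {p, z}) lam := by
  unfold secantTo
  rw [qpts_pair lam hFz hz hind hpol]
  apply Set.ncard_pair
  intro he
  obtain ⟨γ, hγ, he⟩ := pt_eq_pt_iff.mp he
  have heq : (-(Fq F lam p) - γ) • z + polarFq F lam p z • p = 0 := by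
    have h := he
    rw [← sub_eq_zero] at h
    rw [← h]; funext i
    simp only [Pi.add_apply, Pi.smul_apply, Pi.sub_apply, smul_eq_mul, Pi.zero_apply]
    ring
  exact hpol (indep_pair_iff.mp hind _ _ heq).2

/-! ### tangent lines to the conic and external points -/

/-- the discriminant-like quantity `w₂² - w₁w₃` -/
def dd (F : Type) [Field F] (w : Fin 4 → F) : F := w 1 ^ 2 - w 0 * w 2

lemma Fq_zero_eq_neg_dd (w : Fin 4 → F) : Fq F 0 w = -(dd F w) := by
  simp only [Fq, dd]; ring

/-- the parameters of conic points whose tangent line passes through `w` -/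
def Zset (F : Type) [Field F] (w : Fin 4 → F) : Set (F ⊕ Unit) :=
  {x | polarFq F 0 (cvec F x) w = 0}

lemma polar_cvec_inl (t : F) (w : Fin 4 → F) :
    polarFq F 0 (cvec F (Sum.inl t)) w = w 2 + t ^ 2 * w 0 - 2 * (t * w 1) := by
  rw [polarFq_eq]; simp [cvec]; try ring

lemma polar_cvec_inr (u : Unit) (w : Fin 4 → F) :
    polarFq F 0 (cvec F (Sum.inr u)) w = w 0 := by
  rw [polarFq_eq]; simp [cvec]

lemma Zset_ncard_two (h2 : (2 : F) ≠ 0) {w : Fin 4 → F} {s : F} (hs : s ≠ 0)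
    (hd : dd F w = s ^ 2) : (Zset F w).ncard = 2 := by
  simp only [dd] at hd
  by_cases h0 : w 0 = 0
  · have hw1 : w 1 ≠ 0 := by
      intro h1
      apply hs
      have : s ^ 2 = 0 := by rw [← hd, h1, h0]; ring
      exact pow_eq_zero_iff two_ne_zero |>.mp this
    have h2w1 : 2 * w 1 ≠ 0 := mul_ne_zero h2 hw1
    have hset : Zset F w = {Sum.inl (w 2 * (2 * w 1)⁻¹), Sum.inr ()} := by
      ext x
      cases x with
      | inl t =>
        simp only [Zset, Set.mem_setOf_eq, polar_cvec_inl, Set.mem_insert_iff,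
          Set.mem_singleton_iff, Sum.inl.injEq, reduceCtorEq, or_false]
        constructor
        · intro h
          rw [eq_mul_inv_iff_mul_eq₀ h2w1]
          linear_combination -h + t ^ 2 * h0
        · intro h
          rw [eq_mul_inv_iff_mul_eq₀ h2w1] at h
          linear_combination -h + t ^ 2 * h0
      | inr u =>
        cases u
        simp [Zset, polar_cvec_inr, h0]
    rw [hset]
    exact Set.ncard_pair (by simp)
  · have hset : Zset F w = {Sum.inl ((w 1 + s) * (w 0)⁻¹), Sum.inl ((w 1 - s) * (w 0)⁻¹)} := by
      ext x
      cases x with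
      | inl t =>
        simp only [Zset, Set.mem_setOf_eq, polar_cvec_inl, Set.mem_insert_iff,
          Set.mem_singleton_iff, Sum.inl.injEq]
        constructor
        · intro h
          have key : (w 0 * t - w 1 - s) * (w 0 * t - w 1 + s) = 0 := by
            linear_combination w 0 * h + hd
          rcases mul_eq_zero.mp key with hk | hk
          · left
            rw [eq_mul_inv_iff_mul_eq₀ h0]
            linear_combination hk
          · right
            rw [eq_mul_inv_iff_mul_eq₀ h0]
            linear_combination hk
        · rintro (h | h) <;> rw [eq_mul_inv_iff_mul_eq₀ h0] at h
          · have hsub : t * w 0 - w 1 - s = 0 := by linear_combination h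
            have hG : w 0 * (w 2 + t ^ 2 * w 0 - 2 * (t * w 1)) = 0 := by
              linear_combination (t * w 0 - w 1 + s) * hsub - hd
            exact (mul_eq_zero.mp hG).resolve_left h0
          · have hsub : t * w 0 - w 1 + s = 0 := by linear_combination h
            have hG : w 0 * (w 2 + t ^ 2 * w 0 - 2 * (t * w 1)) = 0 := by
              linear_combination (t * w 0 - w 1 - s) * hsub - hd
            exact (mul_eq_zero.mp hG).resolve_left h0
      | inr u =>
        simp only [Zset, Set.mem_setOf_eq, polar_cvec_inr, Set.mem_insert_iff,
          Set.mem_singleton_iff, reduceCtorEq, or_self, iff_false]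
        exact h0
    rw [hset]
    apply Set.ncard_pair
    simp only [ne_eq, Sum.inl.injEq]
    intro h
    have hc := mul_right_cancel₀ (inv_ne_zero h0) h
    have h2s : 2 * s = 0 := by linear_combination hc
    exact hs ((mul_eq_zero.mp h2s).resolve_left h2)
  
lemma Zset_sq (h2 : (2 : F) ≠ 0) {w : Fin 4 → F} (hd0 : dd F w ≠ 0)
    (hZ : (Zset F w).ncard = 2) : ∃ s, s ≠ 0 ∧ dd F w = s ^ 2 := by
  by_cases h0 : w 0 = 0
  · refine ⟨w 1, ?_, by rw [dd, h0]; ring⟩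
    intro h1
    exact hd0 (by rw [dd, h0, h1]; ring)
  · by_contra hns
    push_neg at hns
    have hempty : Zset F w = ∅ := by
      ext x
      simp only [Set.mem_empty_iff_false, iff_false]
      cases x with
      | inl t =>
        intro hx
        simp only [Zset, Set.mem_setOf_eq, polar_cvec_inl] at hx
        have hdd : dd F w = (w 0 * t - w 1) ^ 2 := by
          rw [dd]; linear_combination (-(w 0)) * hx
        have hne : w 0 * t - w 1 ≠ 0 := by
          intro h
          rw [h] at hdd
          exact hd0 (by rw [hdd]; ring)
        exact hns _ hne hdd
      | inr u =>
        intro hx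
        simp only [Zset, Set.mem_setOf_eq, polar_cvec_inr] at hx
        exact h0 hx
    rw [hempty] at hZ
    simp at hZ

lemma cpts_eq_qpts {m : Submodule F (Fin 4 → F)} (hm : m ≤ planePi F) :
    {P | P ∈ conicC F ∧ P ≤ m} = qpts F 0 m := by
  ext Q
  simp only [Set.mem_setOf_eq, qpts, conicC]
  constructor
  · rintro ⟨⟨hq, _⟩, hle⟩; exact ⟨hq, hle⟩
  · rintro ⟨hq, hle⟩; exact ⟨⟨hq, le_trans hle hm⟩, hle⟩

lemma tangent_line_conic_pts {w : Fin 4 → F} (hFw : Fq F 0 w ≠ 0) {x : F ⊕ Unit}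
    (hx : x ∈ Zset F w) :
    {P | P ∈ conicC F ∧ P ≤ Submodule.span F {w, cvec F x}} = {pt F (cvec F x)} := by
  ext Q
  simp only [Set.mem_setOf_eq, Set.mem_singleton_iff]
  constructor
  · rintro ⟨hQC, hQle⟩
    obtain ⟨y, rfl⟩ := conic_rep hQC
    obtain ⟨a, b, hab⟩ := Submodule.mem_span_pair.mp (hQle (mem_pt_self _))
    have hFv : Fq F 0 (a • w + b • cvec F x) = 0 := by rw [hab]; exact Fq_cvec 0 y
    rw [Fq_expand, Fq_cvec] at hFv
    have hpol : polarFq F 0 w (cvec F x) = 0 := by rw [polar_symm]; exact hx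
    rw [hpol] at hFv
    have ha : a = 0 := by
      have h2 : a ^ 2 * Fq F 0 w = 0 := by linear_combination hFv
      rcases mul_eq_zero.mp h2 with h | h
      · exact pow_eq_zero_iff two_ne_zero |>.mp h
      · exact absurd h hFw
    subst ha
    rw [zero_smul, zero_add] at hab
    have := cvec_smul (x := y) (y := x) hab.symm
    rw [this.1]
  · rintro rfl
    exact ⟨conic_cvec x, pt_le_iff.mpr (mem_span_pair_right _ _)⟩

lemma tangent_line_isLine {w : Fin 4 → F} (hFw : Fq F 0 w ≠ 0) (x : F ⊕ Unit) :
    isLine F (Submodule.span F {w, cvec F x}) := by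
  rw [span_pair_comm]
  exact isLine_span_pair (indep_Fq (cvec_ne_zero x) (Fq_cvec 0 x) hFw)

lemma tangent_line_mem {w : Fin 4 → F} (hw3 : w 3 = 0) (hFw : Fq F 0 w ≠ 0)
    {x : F ⊕ Unit} (hx : x ∈ Zset F w) :
    Submodule.span F {w, cvec F x} ∈ lineL1 F := by
  refine ⟨tangent_line_isLine hFw x, span_pair_le hw3 (cvec3 x), ?_⟩
  rw [tangent_line_conic_pts hFw hx, Set.ncard_singleton]

lemma tangents_through_eq {w : Fin 4 → F} (hw3 : w 3 = 0) (hFw : Fq F 0 w ≠ 0) :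
    {m | m ∈ lineL1 F ∧ pt F w ≤ m} =
      (fun x => Submodule.span F {w, cvec F x}) '' (Zset F w) := by
  ext m
  simp only [Set.mem_setOf_eq, Set.mem_image]
  constructor
  · rintro ⟨⟨hml, hmpi, hmc⟩, hwm⟩
    obtain ⟨Q, hQ⟩ := Set.ncard_eq_one.mp hmc
    have hQm : Q ∈ {P | P ∈ conicC F ∧ P ≤ m} := by rw [hQ]; rfl
    obtain ⟨x, rfl⟩ := conic_rep hQm.1
    have hsub : Submodule.span F {w, cvec F x} ≤ m :=
      span_pair_le (pt_le_iff.mp hwm) (pt_le_iff.mp hQm.2)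
    have hmeq : Submodule.span F {w, cvec F x} = m :=
      line_eq_of_le hml (tangent_line_isLine hFw x) hsub
    refine ⟨x, ?_, hmeq⟩
    by_contra hxz
    have hρ : polarFq F 0 w (cvec F x) ≠ 0 := by
      intro h; exact hxz (show polarFq F 0 (cvec F x) w = 0 by rw [polar_symm]; exact h)
    have hsec : secantTo F (Submodule.span F {w, cvec F x}) 0 :=
      secant_of 0 (Fq_cvec 0 x) (cvec_ne_zero x)
        (indep_Fq (cvec_ne_zero x) (Fq_cvec 0 x) hFw) hρ
    rw [secantTo, hmeq] at hsec
    rw [cpts_eq_qpts hmpi, hsec] at hmc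
    norm_num at hmc
  · rintro ⟨x, hx, rfl⟩
    exact ⟨tangent_line_mem hw3 hFw hx, pt_le_iff.mpr (mem_span_pair_left _ _)⟩

lemma tangents_through_ncard {w : Fin 4 → F} (hw3 : w 3 = 0) (hFw : Fq F 0 w ≠ 0) :
    {m | m ∈ lineL1 F ∧ pt F w ≤ m}.ncard = (Zset F w).ncard := by
  rw [tangents_through_eq hw3 hFw]
  apply Set.ncard_image_of_injOn
  intro x hx y hy hxy
  have h1 := tangent_line_conic_pts hFw hx
  have h2 := tangent_line_conic_pts hFw hy
  simp only at hxy
  rw [hxy] at h1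
  rw [h1] at h2
  exact pt_cvec_inj (Set.singleton_eq_singleton_iff.mp h2)

/-- characterization of the external points in the plane π -/
lemma mem_setE_iff (h2 : (2 : F) ≠ 0) {w : Fin 4 → F} (hw : w ≠ 0) (hw3 : w 3 = 0) :
    pt F w ∈ setE F ↔ ∃ s, s ≠ 0 ∧ dd F w = s ^ 2 := by
  constructor
  · rintro ⟨_, _, hnc, htc⟩
    have hFw : Fq F 0 w ≠ 0 := by
      intro h
      exact hnc ((conic_pt_iff hw).mpr ⟨hw3, h⟩)
    have hd0 : dd F w ≠ 0 := by
      intro h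
      rw [Fq_zero_eq_neg_dd, h, neg_zero] at hFw
      exact hFw rfl
    rw [tangents_through_ncard hw3 hFw] at htc
    exact Zset_sq h2 hd0 htc
  · rintro ⟨s, hs, hd⟩
    have hd0 : dd F w ≠ 0 := by
      rw [hd]; exact pow_ne_zero 2 hs
    have hFw : Fq F 0 w ≠ 0 := by
      rw [Fq_zero_eq_neg_dd]; exact neg_ne_zero.mpr hd0
    refine ⟨isPoint_pt hw, pt_le_iff.mpr hw3, ?_, ?_⟩
    · intro hC
      exact hFw ((conic_pt_iff hw).mp hC).2
    · rw [tangents_through_ncard hw3 hFw]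
      exact Zset_ncard_two h2 hs hd

lemma point_rep_norm {P : Submodule F (Fin 4 → F)} (hP : isPoint F P)
    (h : ¬ P ≤ planePi F) : ∃ p : Fin 4 → F, p 3 = 1 ∧ P = pt F p := by
  obtain ⟨v, hv, rfl⟩ := point_rep hP
  have hv3 : v 3 ≠ 0 := fun h3 => h (pt_le_iff.mpr h3)
  exact ⟨(v 3)⁻¹ • v, by simp [inv_mul_cancel₀ hv3],
    (pt_smul (inv_ne_zero hv3)).symm⟩

lemma three_not_in_pair {α : Type*} {a b x y z : α} (hxy : x ≠ y) (hxz : x ≠ z)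
    (hyz : y ≠ z) (hx : x = a ∨ x = b) (hy : y = a ∨ y = b) (hz : z = a ∨ z = b) :
    False := by
  rcases hx with rfl | rfl <;> rcases hy with rfl | rfl <;> rcases hz with rfl | rfl <;>
    simp_all

lemma dd_cvec (x : F ⊕ Unit) : dd F (cvec F x) = 0 := by
  have h := Fq_cvec (F := F) 0 x
  rw [Fq_zero_eq_neg_dd] at h
  exact neg_eq_zero.mp h

lemma two_ne_zero_of_odd {q : ℕ} [Fintype F] (hq : Fintype.card F = q) (hodd : Odd q) :
    (2 : F) ≠ 0 := by
  intro h0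
  have hd : ringChar F ∣ 2 := ringChar.dvd (by exact_mod_cast h0 : ((2 : ℕ) : F) = 0)
  have h2 : ringChar F = 2 := by
    rcases (Nat.dvd_prime Nat.prime_two).mp hd with h1 | h1
    · exact absurd h1 CharP.ringChar_ne_one
    · exact h1
  have hev := FiniteField.even_card_of_char_two h2
  rw [hq, Nat.odd_iff] at *
  omega

lemma ncard_prod [Fintype F] (t : Set (F ⊕ Unit)) (s : Set F) :
    (t ×ˢ s).ncard = t.ncard * s.ncard := by
  classical
  rw [Set.ncard_eq_toFinset_card', Set.toFinset_prod, Finset.card_product,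
    ← Set.ncard_eq_toFinset_card', ← Set.ncard_eq_toFinset_card']

lemma ncard_ne_zero [Fintype F] {q : ℕ} (hq : Fintype.card F = q) :
    ({u : F | u ≠ 0}).ncard = q - 1 := by
  classical
  have h : ({u : F | u ≠ 0}) = (Set.univ \ {0} : Set F) := by ext; simp
  rw [h, Set.ncard_diff (by simp), Set.ncard_univ, Set.ncard_singleton,
    Nat.card_eq_fintype_card, hq]

lemma ncard_compl_Zset [Fintype F] {q : ℕ} (hq : Fintype.card F = q)
    {w : Fin 4 → F} (hZ : (Zset F w).ncard = 2) :
    ({x | x ∉ Zset F w}).ncard = q - 1 := by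
  classical
  have h : ({x | x ∉ Zset F w}) = (Set.univ \ Zset F w) := by ext; simp
  rw [h, Set.ncard_diff (by simp), Set.ncard_univ, hZ, Nat.card_eq_fintype_card]
  simp [hq]

end St11

theorem statement_11 {F : Type} [Field F] [Fintype F] (q : ℕ)
    (hq : Fintype.card F = q) (hodd : Odd q) :
    ∀ P : Submodule F (Fin 4 → F), isPoint F P → ¬ P ≤ planePi F → P ≠ pointU4 F →
      ((pointU4 F ⊔ P) ⊓ planePi F) ∈ setE F →
      ({l | l ∈ lineL3' F ∧ P ≤ l}).ncard = 1 ∧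
      ({l | l ∈ lineL4' F ∧ P ≤ l}).ncard = q - 1 ∧
      ({l | l ∈ lineL4 F ∧ P ≤ l}).ncard = 2 * (q - 1) ∧
      {l | l ∈ lineL1 F ∧ P ≤ l} = ∅ ∧
      {l | l ∈ lineL2 F ∧ P ≤ l} = ∅ ∧
      {l | l ∈ lineL3 F ∧ P ≤ l} = ∅ ∧
      {l | l ∈ lineL1' F ∧ P ≤ l} = ∅ ∧
      {l | l ∈ lineL2' F ∧ P ≤ l} = ∅ := by
  classical
  intro P hP hPpi hPU hE
  obtain ⟨p, hp3, rfl⟩ := St11.point_rep_norm hP hPpi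
  have h2 : (2 : F) ≠ 0 := St11.two_ne_zero_of_odd hq hodd
  set e : Fin 4 → F := St11.e4 F with hedef
  set p' : Fin 4 → F := p - e with hp'def
  have he0 : e 0 = 0 := by simp [hedef, St11.e4]
  have he1 : e 1 = 0 := by simp [hedef, St11.e4]
  have he2 : e 2 = 0 := by simp [hedef, St11.e4]
  have he3 : e 3 = 1 := by simp [hedef, St11.e4]
  have hc0 : p' 0 = p 0 := by simp [hp'def, he0]
  have hc1 : p' 1 = p 1 := by simp [hp'def, he1]
  have hc2 : p' 2 = p 2 := by simp [hp'def, he2]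
  have hp'3 : p' 3 = 0 := by simp [hp'def, he3, hp3]
  have hpne : p ≠ 0 := by
    intro h; rw [h] at hp3; exact one_ne_zero hp3.symm
  have hsupU : pointU4 F ⊔ St11.pt F p = Submodule.span F {p, e} := by
    rw [St11.pointU4_eq, ← hedef, St11.sup_pt_eq_span_pair, St11.span_pair_comm]
  have hinfU : Submodule.span F {p, e} ⊓ planePi F = St11.pt F p' := by
    rw [St11.span_pair_inf_pi hp3 e, he3, one_smul]
    have hh : e - p = (-1 : F) • p' := by
      funext i
      simp only [Pi.sub_apply, Pi.smul_apply, smul_eq_mul, hp'def]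
      ring
    rw [hh, St11.pt_smul (by norm_num : (-1 : F) ≠ 0)]
  have hEp : St11.pt F p' ∈ setE F := by
    rw [hsupU, hinfU] at hE; exact hE
  have hp'ne : p' ≠ 0 := by
    intro h
    apply hPU
    have hpe : p = e := by rwa [hp'def, sub_eq_zero] at h
    rw [hpe, St11.pointU4_eq, ← hedef]
  obtain ⟨s, hs, hds⟩ := (St11.mem_setE_iff h2 hp'ne hp'3).mp hEp
  have hds' : p' 1 ^ 2 - p' 0 * p' 2 = s ^ 2 := hds
  have hdd0 : St11.dd F p' ≠ 0 := by rw [hds]; exact pow_ne_zero 2 hs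
  have hFp' : Fq F 0 p' ≠ 0 := by
    rw [St11.Fq_zero_eq_neg_dd]; exact neg_ne_zero.mpr hdd0
  have hFp : Fq F 0 p ≠ 0 := by
    have hFpp' : Fq F 0 p = Fq F 0 p' := by
      simp only [Fq]; rw [← hc0, ← hc1, ← hc2]; ring
    rw [hFpp']; exact hFp'
  have heFq : Fq F 0 e = 0 := by simp [Fq, he0, he1, he3]
  have hene : e ≠ 0 := hedef ▸ St11.e4_ne_zero
  have hindE : LinearIndependent F ![e, p] := St11.indep_Fq hene heFq hFp
  have hlineU : isLine F (Submodule.span F {p, e}) := by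
    rw [St11.span_pair_comm]; exact St11.isLine_span_pair hindE
  have hZ2 : (St11.Zset F p').ncard = 2 := St11.Zset_ncard_two h2 hs hds
  have hindC : ∀ x : F ⊕ Unit, LinearIndependent F ![St11.cvec F x, p] :=
    fun x => St11.indep_Fq (St11.cvec_ne_zero x) (St11.Fq_cvec 0 x) hFp
  have hlineC : ∀ x, isLine F (Submodule.span F {p, St11.cvec F x}) := by
    intro x; rw [St11.span_pair_comm]; exact St11.isLine_span_pair (hindC x)
  refine ⟨?_, ?_, ?_, ?_, ?_, ?_, ?_, ?_⟩
  · -- L3'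
    have hset : {l | l ∈ lineL3' F ∧ St11.pt F p ≤ l} = {Submodule.span F {p, e}} := by
      ext l
      simp only [Set.mem_setOf_eq, Set.mem_singleton_iff]
      constructor
      · rintro ⟨⟨hl, hUl, _⟩, hpl⟩
        rw [St11.pointU4_eq, ← hedef, St11.pt_le_iff] at hUl
        exact (St11.line_eq_of_le hl hlineU
          (St11.span_pair_le (St11.pt_le_iff.mp hpl) hUl)).symm
      · rintro rfl
        refine ⟨⟨hlineU, ?_, ?_⟩, St11.pt_le_iff.mpr (St11.mem_span_pair_left p e)⟩
        · rw [St11.pointU4_eq, ← hedef]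
          exact St11.pt_le_iff.mpr (St11.mem_span_pair_right p e)
        · rw [hinfU]; exact hEp
    rw [hset, Set.ncard_singleton]
  · -- L4'
    have hset : {l | l ∈ lineL4' F ∧ St11.pt F p ≤ l} =
        (fun x => Submodule.span F {p, St11.cvec F x}) '' {x | x ∉ St11.Zset F p'} := by
      ext l
      simp only [Set.mem_setOf_eq, Set.mem_image]
      constructor
      · rintro ⟨⟨hl, hC, hsec⟩, hpl⟩
        obtain ⟨x, hx⟩ := St11.conic_rep hC
        have hcl : St11.cvec F x ∈ l := by
          have hle : l ⊓ planePi F ≤ l := inf_le_left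
          rw [hx] at hle
          exact hle (St11.mem_pt_self _)
        have heq : Submodule.span F {p, St11.cvec F x} = l :=
          St11.line_eq_of_le hl (hlineC x) (St11.span_pair_le (St11.pt_le_iff.mp hpl) hcl)
        refine ⟨x, ?_, heq⟩
        intro hxZ
        have hFlp : Fq F (St11.dd F p') p = 0 := by
          simp only [Fq, St11.dd, hp3]
          rw [← hc0, ← hc1, ← hc2]; ring
        have hpol0 : polarFq F (St11.dd F p') p (St11.cvec F x) = 0 := by
          rw [polarFq_eq, ← hc0, ← hc1, ← hc2]
          have hxz' : polarFq F 0 (St11.cvec F x) p' = 0 := hxZ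
          rw [polarFq_eq] at hxz'
          rw [St11.cvec3]
          linear_combination hxz'
        have hFsum : Fq F (St11.dd F p') (p + St11.cvec F x) = 0 := by
          have hrw : p + St11.cvec F x = (1 : F) • p + (1 : F) • St11.cvec F x := by
            simp
          rw [hrw, St11.Fq_expand, hFlp, hpol0, St11.Fq_cvec]
          ring
        have hsumne : p + St11.cvec F x ≠ 0 := by
          intro h
          have hh : (1 : F) • St11.cvec F x + (1 : F) • p = 0 := by
            rw [one_smul, one_smul, add_comm]; exact h
          exact one_ne_zero (St11.indep_pair_iff.mp (hindC x) _ _ hh).1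
        have hm1 : St11.pt F p ∈ qpts F (St11.dd F p') l :=
          ⟨(St11.quadric_pt_iff hpne _).mpr hFlp,
            by rw [← heq]; exact St11.pt_le_iff.mpr (St11.mem_span_pair_left _ _)⟩
        have hm2 : St11.pt F (St11.cvec F x) ∈ qpts F (St11.dd F p') l :=
          ⟨(St11.quadric_pt_iff (St11.cvec_ne_zero x) _).mpr (St11.Fq_cvec _ x),
            by rw [← heq]; exact St11.pt_le_iff.mpr (St11.mem_span_pair_right _ _)⟩
        have hm3 : St11.pt F (p + St11.cvec F x) ∈ qpts F (St11.dd F p') l :=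
          ⟨(St11.quadric_pt_iff hsumne _).mpr hFsum,
            by rw [← heq]; exact St11.pt_le_iff.mpr (Submodule.add_mem _
              (St11.mem_span_pair_left _ _) (St11.mem_span_pair_right _ _))⟩
        have hne12 : St11.pt F p ≠ St11.pt F (St11.cvec F x) :=
          (St11.pt_ne_of_indep (hindC x)).symm
        have hne13 : St11.pt F p ≠ St11.pt F (p + St11.cvec F x) := by
          intro h
          obtain ⟨γ, hγ, hh⟩ := St11.pt_eq_pt_iff.mp h
          have hh2 : (1 : F) • St11.cvec F x + (1 - γ) • p = 0 := by
            funext i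
            have hhh := congr_fun hh i
            simp only [Pi.add_apply, Pi.smul_apply, smul_eq_mul, Pi.zero_apply] at hhh ⊢
            linear_combination hhh
          exact one_ne_zero (St11.indep_pair_iff.mp (hindC x) _ _ hh2).1
        have hne23 : St11.pt F (St11.cvec F x) ≠ St11.pt F (p + St11.cvec F x) := by
          intro h
          obtain ⟨γ, hγ, hh⟩ := St11.pt_eq_pt_iff.mp h
          have hh2 : (γ - 1) • St11.cvec F x + (-1 : F) • p = 0 := by
            funext i
            have hhh := congr_fun hh i
            simp only [Pi.add_apply, Pi.smul_apply, smul_eq_mul, Pi.zero_apply] at hhh ⊢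
            linear_combination -hhh
          have hcoef := (St11.indep_pair_iff.mp (hindC x) _ _ hh2).2
          norm_num at hcoef
        obtain ⟨A, B, hAB, habs⟩ := Set.ncard_eq_two.mp (hsec (St11.dd F p'))
        rw [habs] at hm1 hm2 hm3
        simp only [Set.mem_insert_iff, Set.mem_singleton_iff] at hm1 hm2 hm3
        exact St11.three_not_in_pair hne12 hne13 hne23 hm1 hm2 hm3
      · rintro ⟨x, hx, rfl⟩
        refine ⟨⟨hlineC x, ?_, ?_⟩, St11.pt_le_iff.mpr (St11.mem_span_pair_left _ _)⟩
        · rw [St11.span_pair_inf_pi hp3, St11.cvec3, zero_smul, sub_zero]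
          exact St11.conic_cvec x
        · intro lam
          have hpolne : polarFq F lam p (St11.cvec F x) ≠ 0 := by
            have hlam : polarFq F lam p (St11.cvec F x) =
                polarFq F 0 (St11.cvec F x) p' := by
              rw [polarFq_eq, polarFq_eq, ← hc0, ← hc1, ← hc2, St11.cvec3]
              ring
            rw [hlam]
            exact hx
          exact St11.secant_of lam (St11.Fq_cvec lam x) (St11.cvec_ne_zero x)
            (hindC x) hpolne
    have hinj : Set.InjOn (fun x => Submodule.span F {p, St11.cvec F x})
        {x | x ∉ St11.Zset F p'} := by
      intro x hxm y hym hxy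
      simp only at hxy
      have hmem : St11.cvec F y ∈ Submodule.span F {p, St11.cvec F x} := by
        rw [hxy]; exact St11.mem_span_pair_right _ _
      obtain ⟨a, b, hab⟩ := Submodule.mem_span_pair.mp hmem
      have ha : a = 0 := by
        have h3 := congr_fun hab 3
        simp only [Pi.add_apply, Pi.smul_apply, smul_eq_mul] at h3
        rw [hp3, St11.cvec3, St11.cvec3] at h3
        simpa using h3
      rw [ha, zero_smul, zero_add] at hab
      exact ((St11.cvec_smul hab.symm).1).symm
    rw [hset, Set.ncard_image_of_injOn hinj, St11.ncard_compl_Zset hq hZ2]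
  · -- L4
    have hz3 : ∀ (x : F ⊕ Unit) (u : F), (St11.cvec F x + u • e) 3 = u := by
      intro x u
      simp only [Pi.add_apply, Pi.smul_apply, smul_eq_mul, St11.cvec3, he3]
      ring
    have hFz : ∀ (x : F ⊕ Unit) (u : F), Fq F 0 (St11.cvec F x + u • e) = 0 := by
      intro x u
      have hh : Fq F 0 (St11.cvec F x + u • e) = Fq F 0 (St11.cvec F x) := by
        simp only [Fq, Pi.add_apply, Pi.smul_apply, smul_eq_mul, he0, he1, he2]
        ring
      rw [hh, St11.Fq_cvec]
    have hzne : ∀ (x : F ⊕ Unit) (u : F), St11.cvec F x + u • e ≠ 0 := by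
      intro x u h
      cases x with
      | inl t =>
        have h0 := congr_fun h 0
        simp [St11.cvec, he0] at h0
      | inr w =>
        have h0 := congr_fun h 2
        simp [St11.cvec, he2] at h0
    have hindz : ∀ (x : F ⊕ Unit) (u : F),
        LinearIndependent F ![St11.cvec F x + u • e, p] :=
      fun x u => St11.indep_Fq (hzne x u) (hFz x u) hFp
    have hpolz : ∀ x ∈ St11.Zset F p', ∀ u : F,
        polarFq F 0 p (St11.cvec F x + u • e) = 0 := by
      intro x hx u
      have hxz' : polarFq F 0 (St11.cvec F x) p' = 0 := hx
      rw [polarFq_eq] at hxz'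
      rw [polarFq_eq]
      simp only [Pi.add_apply, Pi.smul_apply, smul_eq_mul, he0, he1, he2]
      rw [← hc0, ← hc1, ← hc2]
      linear_combination hxz'
    have hqpts : ∀ x ∈ St11.Zset F p', ∀ u : F,
        qpts F 0 (Submodule.span F {p, St11.cvec F x + u • e}) =
          {St11.pt F (St11.cvec F x + u • e)} :=
      fun x hx u => St11.qpts_single 0 hFp (hFz x u) (hzne x u) (hpolz x hx u)
    have hwne : ∀ (x : F ⊕ Unit) (u : F), u ≠ 0 → St11.cvec F x - u • p' ≠ 0 := by
      intro x u hu h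
      have hh : St11.cvec F x = u • p' := by rwa [sub_eq_zero] at h
      have hF := St11.Fq_cvec (F := F) 0 x
      rw [hh, St11.Fq_smul] at hF
      rcases mul_eq_zero.mp hF with hcc | hcc
      · exact hu (pow_eq_zero_iff two_ne_zero |>.mp hcc)
      · exact hFp' hcc
    have hwE : ∀ x ∈ St11.Zset F p', ∀ u : F, u ≠ 0 →
        St11.pt F (St11.cvec F x - u • p') ∈ setE F := by
      intro x hx u hu
      have hw3 : (St11.cvec F x - u • p') 3 = 0 := by
        simp [St11.cvec3, hp'3]
      refine (St11.mem_setE_iff h2 (hwne x u hu) hw3).mpr ⟨u * s, mul_ne_zero hu hs, ?_⟩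
      have hcd : St11.dd F (St11.cvec F x) = 0 := St11.dd_cvec x
      have hxz' : polarFq F 0 (St11.cvec F x) p' = 0 := hx
      rw [polarFq_eq] at hxz'
      simp only [St11.dd, Pi.sub_apply, Pi.smul_apply, smul_eq_mul] at hcd ⊢
      linear_combination hcd + u ^ 2 * hds' + u * hxz'
    have hset : {l | l ∈ lineL4 F ∧ St11.pt F p ≤ l} =
        (fun y : (F ⊕ Unit) × F => Submodule.span F {p, St11.cvec F y.1 + y.2 • e}) ''
          (St11.Zset F p' ×ˢ {u : F | u ≠ 0}) := by
      ext l
      simp only [Set.mem_setOf_eq, Set.mem_image, Set.mem_prod]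
      constructor
      · rintro ⟨⟨hl, hUl, htan, hEl⟩, hpl⟩
        obtain ⟨Q, hQ⟩ := Set.ncard_eq_one.mp htan
        have hQm : Q ∈ qpts F 0 l := by rw [hQ]; rfl
        obtain ⟨z₀, hz₀ne, rfl⟩ := St11.point_rep hQm.1.1
        have hFz₀ : Fq F 0 z₀ = 0 := hQm.1.2 z₀ (St11.mem_pt_self _)
        have hz₀l : z₀ ∈ l := hQm.2 (St11.mem_pt_self _)
        have hlz : isLine F (Submodule.span F {p, z₀}) := by
          rw [St11.span_pair_comm]
          exact St11.isLine_span_pair (St11.indep_Fq hz₀ne hFz₀ hFp)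
        have heq : Submodule.span F {p, z₀} = l :=
          St11.line_eq_of_le hl hlz (St11.span_pair_le (St11.pt_le_iff.mp hpl) hz₀l)
        have hρ : polarFq F 0 p z₀ = 0 := by
          by_contra hρ
          have hsec := St11.secant_of 0 hFz₀ hz₀ne (St11.indep_Fq hz₀ne hFz₀ hFp) hρ
          rw [secantTo, heq] at hsec
          have htan1 : (qpts F 0 l).ncard = 1 := htan
          rw [htan1] at hsec
          norm_num at hsec
        have hz'3 : (z₀ - z₀ 3 • e) 3 = 0 := by simp [he3]
        have hFz' : Fq F 0 (z₀ - z₀ 3 • e) = 0 := by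
          have hh : Fq F 0 (z₀ - z₀ 3 • e) = Fq F 0 z₀ := by
            simp only [Fq, Pi.sub_apply, Pi.smul_apply, smul_eq_mul, he0, he1, he2]
            ring
          rw [hh, hFz₀]
        have hz'ne : z₀ - z₀ 3 • e ≠ 0 := by
          intro h
          apply hUl
          have hz₀e : z₀ = z₀ 3 • e := by rwa [sub_eq_zero] at h
          have hu'ne : z₀ 3 ≠ 0 := by
            intro h0; rw [h0, zero_smul] at hz₀e; exact hz₀ne hz₀e
          rw [St11.pointU4_eq, ← hedef, St11.pt_le_iff]
          have hh : e = (z₀ 3)⁻¹ • z₀ := by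
            calc e = (z₀ 3)⁻¹ • (z₀ 3 • e) := by
                  rw [smul_smul, inv_mul_cancel₀ hu'ne, one_smul]
              _ = (z₀ 3)⁻¹ • z₀ := by rw [← hz₀e]
          rw [hh]
          exact Submodule.smul_mem _ _ hz₀l
        obtain ⟨x, hxx⟩ := St11.conic_rep ((St11.conic_pt_iff hz'ne).mpr ⟨hz'3, hFz'⟩)
        obtain ⟨γ, hγ, hcx⟩ := St11.pt_eq_pt_iff.mp hxx
        have hx0 : St11.cvec F x 0 = γ * z₀ 0 := by
          have hh := congr_fun hcx 0
          simpa [he0] using hh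
        have hx1 : St11.cvec F x 1 = γ * z₀ 1 := by
          have hh := congr_fun hcx 1
          simpa [he1] using hh
        have hx2 : St11.cvec F x 2 = γ * z₀ 2 := by
          have hh := congr_fun hcx 2
          simpa [he2] using hh
        have hxZ : x ∈ St11.Zset F p' := by
          show polarFq F 0 (St11.cvec F x) p' = 0
          rw [polarFq_eq] at hρ
          rw [polarFq_eq, hx0, hx1, hx2, hc0, hc1, hc2]
          linear_combination γ * hρ
        refine ⟨(x, γ * z₀ 3), ⟨hxZ, ?_⟩, ?_⟩
        · show γ * z₀ 3 ≠ 0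
          intro h
          rcases mul_eq_zero.mp h with h | h
          · exact hγ h
          · apply hEl.2.2.1
            rw [← heq, St11.span_pair_inf_pi hp3, h, zero_smul, sub_zero]
            exact (St11.conic_pt_iff hz₀ne).mpr ⟨h, hFz₀⟩
        · show Submodule.span F {p, St11.cvec F x + (γ * z₀ 3) • e} = l
          have hzz : St11.cvec F x + (γ * z₀ 3) • e = γ • z₀ := by
            funext i
            have hh := congr_fun hcx i
            simp only [Pi.add_apply, Pi.smul_apply, Pi.sub_apply, smul_eq_mul] at hh ⊢
            linear_combination hh
          rw [hzz, St11.span_pair_smul hγ, heq]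
      · rintro ⟨⟨x, u⟩, ⟨hxZ, hu⟩, rfl⟩
        have hu' : u ≠ 0 := hu
        refine ⟨⟨?_, ?_, ?_, ?_⟩, St11.pt_le_iff.mpr (St11.mem_span_pair_left _ _)⟩
        · rw [St11.span_pair_comm]; exact St11.isLine_span_pair (hindz x u)
        · intro hU
          rw [St11.pointU4_eq, ← hedef, St11.pt_le_iff] at hU
          obtain ⟨a, b, hab⟩ := Submodule.mem_span_pair.mp hU
          have h3 : a + b * u = 1 := by
            have hh := congr_fun hab 3
            simp only [Pi.add_apply, Pi.smul_apply, smul_eq_mul] at hh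
            rw [hp3, St11.cvec3, he3] at hh
            linear_combination hh
          have hvec : b • St11.cvec F x + a • p' = 0 := by
            have hkey : b • St11.cvec F x + a • p' =
                (a • p + b • (St11.cvec F x + u • e)) - (a + b * u) • e := by
              rw [hp'def]; module
            rw [hkey, hab, h3, one_smul, sub_self]
          have hcoefs := St11.indep_pair_iff.mp
            (St11.indep_Fq (St11.cvec_ne_zero x) (St11.Fq_cvec 0 x) hFp') b a hvec
          rw [hcoefs.1, hcoefs.2] at h3
          norm_num at h3
        · exact St11.tangent_of 0 hFp (hFz x u) (hzne x u) (hpolz x hxZ u)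
        · rw [St11.span_pair_inf_pi hp3, hz3 x u]
          have hweq : St11.cvec F x + u • e - u • p = St11.cvec F x - u • p' := by
            funext i
            simp only [Pi.add_apply, Pi.sub_apply, Pi.smul_apply, smul_eq_mul, hp'def]
            ring
          rw [hweq]
          exact hwE x hxZ u hu'
    have hinj : Set.InjOn (fun y : (F ⊕ Unit) × F =>
        Submodule.span F {p, St11.cvec F y.1 + y.2 • e})
        (St11.Zset F p' ×ˢ {u : F | u ≠ 0}) := by
      rintro ⟨x, u⟩ hxu ⟨y, w⟩ hyw hxy
      simp only [Set.mem_prod, Set.mem_setOf_eq] at hxu hyw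
      simp only at hxy
      have q1 := hqpts x hxu.1 u
      have q2 := hqpts y hyw.1 w
      rw [hxy] at q1
      rw [q1] at q2
      obtain ⟨γ, hγ, hzz⟩ := St11.pt_eq_pt_iff.mp (Set.singleton_eq_singleton_iff.mp q2)
      have hwγu : w = γ * u := by
        have h3 := congr_fun hzz 3
        simp only [Pi.add_apply, Pi.smul_apply, smul_eq_mul] at h3
        rw [St11.cvec3, St11.cvec3, he3] at h3
        linear_combination h3
      have hcv : St11.cvec F y = γ • St11.cvec F x := by
        have hkey : St11.cvec F y = (St11.cvec F y + w • e) - w • e := by module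
        rw [hkey, hzz, hwγu]
        module
      have hyx := (St11.cvec_smul hcv).1
      have hγ1 := (St11.cvec_smul hcv).2
      have hwu : w = u := by rw [hwγu, hγ1, one_mul]
      rw [hyx, hwu]
    rw [hset, Set.ncard_image_of_injOn hinj, St11.ncard_prod, hZ2,
      St11.ncard_ne_zero hq]
  · -- L1 empty
    rw [Set.eq_empty_iff_forall_notMem]
    rintro l ⟨⟨_, hlpi, _⟩, hpl⟩
    exact hPpi (le_trans hpl hlpi)
  · -- L2 empty
    rw [Set.eq_empty_iff_forall_notMem]
    rintro l ⟨⟨_, hlpi, _⟩, hpl⟩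
    exact hPpi (le_trans hpl hlpi)
  · -- L3 empty
    rw [Set.eq_empty_iff_forall_notMem]
    rintro l ⟨⟨_, hlpi, _⟩, hpl⟩
    exact hPpi (le_trans hpl hlpi)
  · -- L1' empty
    rw [Set.eq_empty_iff_forall_notMem]
    rintro l ⟨⟨hl, hUl, hall⟩, hpl⟩
    apply hFp'
    apply hall
    rw [St11.pointU4_eq, ← hedef, St11.pt_le_iff] at hUl
    rw [hp'def]
    exact Submodule.sub_mem l (St11.pt_le_iff.mp hpl) hUl
  · -- L2' empty
    rw [Set.eq_empty_iff_forall_notMem]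
    rintro l ⟨⟨hl, hUl, hIl⟩, hpl⟩
    rw [St11.pointU4_eq, ← hedef, St11.pt_le_iff] at hUl
    have heq : Submodule.span F {p, e} = l :=
      St11.line_eq_of_le hl hlineU (St11.span_pair_le (St11.pt_le_iff.mp hpl) hUl)
    rw [← heq, hinfU] at hIl
    have h0 := hIl.2.2.2
    have h2' := hEp.2.2.2
    rw [h0] at h2'
    norm_num at h2'
end

section
/- Let L be a Cameron–Liebler line class of PG(3,q) with parameter (q²+1)/2, and let 𝒜 and ℬ be two sets of lines of PG(3,q) of equal size such that: (i) 𝒜 ⊆ L and ℬ ∩ L = ∅; (ii) for every line ℓ with ℓ ∉ 𝒜 ∪ ℬ, |𝒜_ℓ| = |ℬ_ℓ|; (iii) for every line ℓ ∈ 𝒜, |𝒜_ℓ| − |ℬ_ℓ| = q²; (iv) for every line ℓ ∈ ℬ, |ℬ_ℓ| − |𝒜_ℓ| = q². Then the set (L ∖ 𝒜) ∪ ℬ is a Cameron–Liebler line class with parameter (q²+1)/2. -/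
section Statement13Aux
set_option linter.unusedSectionVars false

open Module Finset

namespace CL13
variable {F : Type} [Field F] [Fintype F]

instance : Finite (Submodule F (Fin 4 → F)) :=
  Finite.of_injective (fun W => (W : Set (Fin 4 → F))) SetLike.coe_injective

noncomputable instance : Fintype (Submodule F (Fin 4 → F)) := Fintype.ofFinite _

lemma card_points_mul (W : Submodule F (Fin 4 → F)) :
    {P : Submodule F (Fin 4 → F) | Module.finrank F P = 1 ∧ P ≤ W}.ncard *
      (Fintype.card F - 1) = Fintype.card F ^ Module.finrank F W - 1 := by
  classical
  set Pts : Finset (Submodule F (Fin 4 → F)) :=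
    univ.filter (fun P => Module.finrank F P = 1 ∧ P ≤ W) with hPts
  set Vs : Finset (Fin 4 → F) := (W : Set (Fin 4 → F)).toFinset.erase 0 with hVs
  have hmemV : ∀ v, v ∈ Vs ↔ v ∈ W ∧ v ≠ 0 := by
    intro v
    simp [hVs, Set.mem_toFinset, and_comm]
  have hcardV : Vs.card = Fintype.card F ^ Module.finrank F W - 1 := by
    rw [hVs, Finset.card_erase_of_mem (by simp [Set.mem_toFinset])]
    rw [Set.toFinset_card]
    congr 1
    rw [← card_eq_pow_finrank (K := F) (V := W)]
    exact Fintype.card_congr (Equiv.subtypeEquivRight (fun x => Iff.rfl))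
  have key : Vs.card = ∑ P ∈ Pts, (Vs.filter (fun v => Submodule.span F {v} = P)).card := by
    apply Finset.card_eq_sum_card_fiberwise
    intro v hv
    rw [Finset.mem_coe, hmemV] at hv
    simp only [Finset.mem_coe, hPts, mem_filter, mem_univ, true_and]
    exact ⟨finrank_span_singleton hv.2, Submodule.span_le.2 (Set.singleton_subset_iff.2 hv.1)⟩
  have hfiber : ∀ P ∈ Pts, (Vs.filter (fun v => Submodule.span F {v} = P)).card
      = Fintype.card F - 1 := by
    intro P hP
    simp only [hPts, mem_filter, mem_univ, true_and] at hP
    have : Vs.filter (fun v => Submodule.span F {v} = P)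
        = (P : Set (Fin 4 → F)).toFinset.erase 0 := by
      ext v
      simp only [mem_filter, mem_erase, Set.mem_toFinset, SetLike.mem_coe, hmemV]
      constructor
      · rintro ⟨⟨hvW, hv0⟩, hsp⟩
        exact ⟨hv0, hsp ▸ Submodule.mem_span_singleton_self v⟩
      · rintro ⟨hv0, hvP⟩
        refine ⟨⟨hP.2 hvP, hv0⟩, ?_⟩
        apply Submodule.eq_of_le_of_finrank_le
          (Submodule.span_le.2 (Set.singleton_subset_iff.2 hvP))
        rw [finrank_span_singleton hv0, hP.1]
    rw [this, Finset.card_erase_of_mem (by simp [Set.mem_toFinset]), Set.toFinset_card]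
    congr 1
    rw [show Fintype.card F = Fintype.card F ^ 1 by ring, ← hP.1]
    rw [← card_eq_pow_finrank (K := F) (V := P)]
    exact Fintype.card_congr (Equiv.subtypeEquivRight (fun x => Iff.rfl))
  have hset : {P : Submodule F (Fin 4 → F) | Module.finrank F P = 1 ∧ P ≤ W}.ncard
      = Pts.card := by
    rw [Set.ncard_eq_toFinset_card']
    congr 1
    ext P
    simp [hPts]
  rw [hset, ← hcardV, key, Finset.sum_congr rfl hfiber, Finset.sum_const, smul_eq_mul]

lemma line_points_card {l : Submodule F (Fin 4 → F)} (hl : Module.finrank F l = 2) :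
    {P : Submodule F (Fin 4 → F) | Module.finrank F P = 1 ∧ P ≤ l}.ncard
      = Fintype.card F + 1 := by
  have h2 : 2 ≤ Fintype.card F := Fintype.one_lt_card
  obtain ⟨k, hk⟩ : ∃ k, Fintype.card F = k + 2 := ⟨Fintype.card F - 2, by omega⟩
  have h := card_points_mul l
  rw [hl] at h
  apply Nat.eq_of_mul_eq_mul_right (show 0 < Fintype.card F - 1 by omega)
  rw [h, hk]
  have : (k + 2) ^ 2 = (k + 2 + 1) * (k + 2 - 1) + 1 := by
    rw [show k + 2 - 1 = k + 1 from rfl]; ring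
  omega

lemma all_points_card :
    {P : Submodule F (Fin 4 → F) | Module.finrank F P = 1}.ncard
      = Fintype.card F ^ 3 + Fintype.card F ^ 2 + Fintype.card F + 1 := by
  have h2 : 2 ≤ Fintype.card F := Fintype.one_lt_card
  obtain ⟨k, hk⟩ : ∃ k, Fintype.card F = k + 2 := ⟨Fintype.card F - 2, by omega⟩
  have h := card_points_mul (F := F) ⊤
  rw [show {P : Submodule F (Fin 4 → F) | Module.finrank F P = 1 ∧ P ≤ ⊤}
      = {P : Submodule F (Fin 4 → F) | Module.finrank F P = 1} by
    ext P; simp] at h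
  have h4 : Module.finrank F (⊤ : Submodule F (Fin 4 → F)) = 4 := by
    rw [finrank_top]
    simp [Module.finrank_fin_fun]
  rw [h4] at h
  apply Nat.eq_of_mul_eq_mul_right (show 0 < Fintype.card F - 1 by omega)
  rw [h, hk]
  have : (k + 2) ^ 4 = ((k+2)^3 + (k+2)^2 + (k+2) + 1) * (k + 2 - 1) + 1 := by
    rw [show k + 2 - 1 = k + 1 from rfl]; ring
  omega

lemma point_ne_bot {P : Submodule F (Fin 4 → F)} (hP : Module.finrank F P = 1) : P ≠ ⊥ := by
  intro h
  rw [h, finrank_bot] at hP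
  exact one_ne_zero hP.symm

lemma line_ne_bot {l : Submodule F (Fin 4 → F)} (hl : Module.finrank F l = 2) : l ≠ ⊥ := by
  intro h
  rw [h, finrank_bot] at hl
  exact two_ne_zero hl.symm

lemma spread_covers {q : ℕ} {S : Set (Submodule F (Fin 4 → F))}
    (hlines : ∀ l ∈ S, Module.finrank F l = 2) (hcard : S.ncard = q ^ 2 + 1)
    (hdisj : ∀ l ∈ S, ∀ l' ∈ S, l ≠ l' → l ⊓ l' = ⊥)
    (hq : Fintype.card F = q)
    {P : Submodule F (Fin 4 → F)} (hP : Module.finrank F P = 1) : ∃ l ∈ S, P ≤ l := by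
  classical
  set Sf : Finset (Submodule F (Fin 4 → F)) := S.toFinset with hSf
  have hmemS : ∀ l, l ∈ Sf ↔ l ∈ S := fun l => Set.mem_toFinset
  set pts : Submodule F (Fin 4 → F) → Finset (Submodule F (Fin 4 → F)) :=
    fun l => univ.filter (fun P => Module.finrank F P = 1 ∧ P ≤ l) with hpts
  set allP : Finset (Submodule F (Fin 4 → F)) :=
    univ.filter (fun P => Module.finrank F P = 1) with hallP
  set U : Finset (Submodule F (Fin 4 → F)) := Sf.biUnion pts with hU
  have hUsub : U ⊆ allP := by
    intro P hPU
    simp only [hU, mem_biUnion, hpts, mem_filter, mem_univ, true_and] at hPU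
    obtain ⟨l, -, h1, -⟩ := hPU
    simp only [hallP, mem_filter, mem_univ, true_and]
    exact h1
  have hptscard : ∀ l ∈ Sf, (pts l).card = q + 1 := by
    intro l hl
    rw [hmemS] at hl
    have := line_points_card (hlines l hl)
    rw [Set.ncard_eq_toFinset_card'] at this
    rw [← hq, ← this]
    congr 1
    ext P
    simp [hpts]
  have hUcard : U.card = (q ^ 2 + 1) * (q + 1) := by
    rw [hU, Finset.card_biUnion]
    · rw [Finset.sum_congr rfl hptscard, Finset.sum_const, smul_eq_mul]
      congr 1
      rw [← hcard, Set.ncard_eq_toFinset_card']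
    · intro l hl l' hl' hne
      rw [Function.onFun, Finset.disjoint_left]
      intro P hP1 hP2
      simp only [hpts, mem_filter, mem_univ, true_and] at hP1 hP2
      have : P ≤ l ⊓ l' := le_inf hP1.2 hP2.2
      rw [hdisj l (hmemS l |>.1 hl) l' (hmemS l' |>.1 hl') hne, le_bot_iff] at this
      exact point_ne_bot hP1.1 this
  have hallcard : allP.card = q ^ 3 + q ^ 2 + q + 1 := by
    have := all_points_card (F := F)
    rw [Set.ncard_eq_toFinset_card'] at this
    rw [← hq, ← this]
    congr 1
    ext P
    simp [hallP]
  have hUeq : U = allP := by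
    apply Finset.eq_of_subset_of_card_le hUsub
    rw [hUcard, hallcard]
    ring_nf
    omega
  have : P ∈ U := by
    rw [hUeq]
    simp only [hallP, mem_filter, mem_univ, true_and]
    exact hP
  simp only [hU, mem_biUnion, hpts, mem_filter, mem_univ, true_and] at this
  obtain ⟨l, hl, -, hle⟩ := this
  exact ⟨l, (hmemS l).1 hl, hle⟩

lemma meets_mem {S : Set (Submodule F (Fin 4 → F))}
    (hlines : ∀ l ∈ S, Module.finrank F l = 2)
    (hdisj : ∀ l ∈ S, ∀ l' ∈ S, l ≠ l' → l ⊓ l' = ⊥)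
    {r : Submodule F (Fin 4 → F)} (hr : r ∈ S) :
    {l | l ∈ S ∧ l ⊓ r ≠ ⊥}.ncard = 1 := by
  have : {l | l ∈ S ∧ l ⊓ r ≠ ⊥} = {r} := by
    ext l
    simp only [Set.mem_setOf_eq, Set.mem_singleton_iff]
    constructor
    · rintro ⟨hlS, hlr⟩
      by_contra hne
      exact hlr (hdisj l hlS r hr hne)
    · rintro rfl
      rw [inf_idem]
      exact ⟨hr, line_ne_bot (hlines l hr)⟩
  rw [this, Set.ncard_singleton]

lemma meets_notmem {q : ℕ} {S : Set (Submodule F (Fin 4 → F))}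
    (hlines : ∀ l ∈ S, Module.finrank F l = 2) (hcard : S.ncard = q ^ 2 + 1)
    (hdisj : ∀ l ∈ S, ∀ l' ∈ S, l ≠ l' → l ⊓ l' = ⊥)
    (hq : Fintype.card F = q)
    {r : Submodule F (Fin 4 → F)} (hrl : Module.finrank F r = 2) (hr : r ∉ S) :
    {l | l ∈ S ∧ l ⊓ r ≠ ⊥}.ncard = q + 1 := by
  have hrank1 : ∀ l ∈ S, l ⊓ r ≠ ⊥ → Module.finrank F (l ⊓ r : Submodule F (Fin 4 → F)) = 1 := by
    intro l hlS hlr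
    have h1 : 1 ≤ Module.finrank F (l ⊓ r : Submodule F (Fin 4 → F)) := by
      rcases Nat.eq_zero_or_pos (Module.finrank F (l ⊓ r : Submodule F (Fin 4 → F))) with h | h
      · exact absurd (Submodule.finrank_eq_zero.1 h) hlr
      · exact h
    have h2 : Module.finrank F (l ⊓ r : Submodule F (Fin 4 → F)) ≤ 2 := by
      rw [← hrl]
      exact Submodule.finrank_mono inf_le_right
    rcases Nat.lt_or_ge (Module.finrank F (l ⊓ r : Submodule F (Fin 4 → F))) 2 with h | h
    · omega
    · exfalso
      have hinf : l ⊓ r = r := by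
        apply Submodule.eq_of_le_of_finrank_le inf_le_right
        omega
      have : r = l := by
        apply Submodule.eq_of_le_of_finrank_le
        · rw [← hinf]; exact inf_le_left
        · rw [hrl, hlines l hlS]
      exact hr (this ▸ hlS)
  rw [← hq, ← line_points_card hrl]
  have hbij : Set.BijOn (fun l => l ⊓ r) {l | l ∈ S ∧ l ⊓ r ≠ ⊥}
      {P : Submodule F (Fin 4 → F) | Module.finrank F P = 1 ∧ P ≤ r} := by
    refine ⟨?_, ?_, ?_⟩
    · rintro l ⟨hlS, hlr⟩
      exact ⟨hrank1 l hlS hlr, inf_le_right⟩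
    · rintro l ⟨hlS, hlr⟩ l' ⟨hl'S, hl'r⟩ heq
      replace heq : l ⊓ r = l' ⊓ r := heq
      by_contra hne
      have : l ⊓ r ≤ l ⊓ l' := le_inf inf_le_left (heq ▸ inf_le_left)
      rw [hdisj l hlS l' hl'S hne, le_bot_iff] at this
      exact hlr this
    · rintro P ⟨hP1, hPr⟩
      obtain ⟨l, hlS, hPl⟩ := spread_covers hlines hcard hdisj hq hP1
      have hne : l ⊓ r ≠ ⊥ := fun h => point_ne_bot hP1 (le_bot_iff.1 (h ▸ le_inf hPl hPr))
      refine ⟨l, ⟨hlS, hne⟩, ?_⟩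
      show l ⊓ r = P
      symm
      apply Submodule.eq_of_le_of_finrank_le (le_inf hPl hPr)
      rw [hP1, hrank1 l hlS hne]
  rw [← hbij.image_eq]
  exact (Set.ncard_image_of_injOn hbij.injOn).symm

lemma filter_card_inter {X S : Set (Submodule F (Fin 4 → F))}
    [DecidablePred (· ∈ S)] [Fintype X] :
    (X.toFinset.filter (· ∈ S)).card = (X ∩ S).ncard := by
  classical
  rw [Set.ncard_eq_toFinset_card']
  congr 1
  ext l
  simp [Set.mem_toFinset]

lemma sum_meeting {q : ℕ} {S : Set (Submodule F (Fin 4 → F))}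
    (hlines : ∀ l ∈ S, Module.finrank F l = 2) (hcard : S.ncard = q ^ 2 + 1)
    (hdisj : ∀ l ∈ S, ∀ l' ∈ S, l ≠ l' → l ⊓ l' = ⊥)
    (hq : Fintype.card F = q)
    {X : Set (Submodule F (Fin 4 → F))} (hX : ∀ l ∈ X, Module.finrank F l = 2)
    [Fintype S] :
    ∑ l ∈ S.toFinset, (linesMeeting F X l).ncard
      = (X ∩ S).ncard + (X \ S).ncard * (q + 1) := by
  classical
  have step1 : ∀ l, (linesMeeting F X l).ncard
      = (X.toFinset.filter (fun r => r ⊓ l ≠ ⊥)).card := by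
    intro l
    rw [Set.ncard_eq_toFinset_card']
    congr 1
    ext r
    rw [Set.mem_toFinset]; simp [linesMeeting]
  have swap : ∑ l ∈ S.toFinset, (X.toFinset.filter (fun r => r ⊓ l ≠ ⊥)).card
      = ∑ r ∈ X.toFinset, (S.toFinset.filter (fun l => r ⊓ l ≠ ⊥)).card := by
    simp_rw [Finset.card_filter]
    exact Finset.sum_comm
  have hterm : ∀ r ∈ X.toFinset, (S.toFinset.filter (fun l => r ⊓ l ≠ ⊥)).card
      = if r ∈ S then 1 else q + 1 := by
    intro r hr
    rw [Set.mem_toFinset] at hr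
    have hcv : (S.toFinset.filter (fun l => r ⊓ l ≠ ⊥)).card
        = {l | l ∈ S ∧ l ⊓ r ≠ ⊥}.ncard := by
      rw [Set.ncard_eq_toFinset_card']
      congr 1
      ext l
      simp [Set.mem_toFinset, inf_comm]
    rw [hcv]
    split_ifs with hrS
    · exact meets_mem hlines hdisj hrS
    · exact meets_notmem hlines hcard hdisj hq (hX r hr) hrS
  calc ∑ l ∈ S.toFinset, (linesMeeting F X l).ncard
      = ∑ r ∈ X.toFinset, (S.toFinset.filter (fun l => r ⊓ l ≠ ⊥)).card := by
        simp_rw [step1]; exact swap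
    _ = ∑ r ∈ X.toFinset, (if r ∈ S then 1 else q + 1) := Finset.sum_congr rfl hterm
    _ = (X ∩ S).ncard + (X \ S).ncard * (q + 1) := by
        rw [Finset.sum_ite, Finset.sum_const, Finset.sum_const, smul_eq_mul, smul_eq_mul,
          mul_one]
        congr 1
        · rw [Set.ncard_eq_toFinset_card']
          congr 1
          ext l
          simp [Set.mem_toFinset]
        · congr 1
          rw [Set.ncard_eq_toFinset_card']
          congr 1
          ext l
          simp [Set.mem_toFinset]

end CL13

end Statement13Aux

theorem statement_13 {F : Type} [Field F] [Fintype F] (q : ℕ)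
    (hq : Fintype.card F = q) (hodd : Odd q)
    (L A B : Set (Submodule F (Fin 4 → F)))
    (hL : isCameronLiebler F q ((q ^ 2 + 1) / 2) L)
    (hAlines : ∀ l ∈ A, isLine F l) (hBlines : ∀ l ∈ B, isLine F l)
    (hsize : A.ncard = B.ncard)
    (hi : A ⊆ L ∧ B ∩ L = ∅)
    (hii : ∀ l : Submodule F (Fin 4 → F), isLine F l → l ∉ A ∪ B →
      (linesMeeting F A l).ncard = (linesMeeting F B l).ncard)
    (hiii : ∀ l ∈ A, (linesMeeting F A l).ncard = (linesMeeting F B l).ncard + q ^ 2)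
    (hiv : ∀ l ∈ B, (linesMeeting F B l).ncard = (linesMeeting F A l).ncard + q ^ 2) :
    isCameronLiebler F q ((q ^ 2 + 1) / 2) ((L \ A) ∪ B) := by
  classical
  obtain ⟨hAL, hBL⟩ := hi
  have hq2 : 2 ≤ q := hq ▸ Fintype.one_lt_card
  have hAB : ∀ l, l ∈ A → l ∈ B → False := fun l h1 h2 =>
    Set.eq_empty_iff_forall_notMem.1 hBL l ⟨h2, hAL h1⟩
  constructor
  · rintro l (⟨hlL, -⟩ | hlB)
    · exact hL.1 l hlL
    · exact hBlines l hlB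
  · intro S hS
    obtain ⟨hSlines, hScard, hSdisj⟩ := hS
    have hSlines' : ∀ l ∈ S, Module.finrank F l = 2 := hSlines
    have hAlines' : ∀ l ∈ A, Module.finrank F l = 2 := hAlines
    have hBlines' : ∀ l ∈ B, Module.finrank F l = 2 := hBlines
    have hsumA := CL13.sum_meeting hSlines' hScard hSdisj hq hAlines'
    have hsumB := CL13.sum_meeting hSlines' hScard hSdisj hq hBlines'
    have hdiff : ∑ l ∈ S.toFinset, ((linesMeeting F A l).ncard : ℤ)
        - ∑ l ∈ S.toFinset, ((linesMeeting F B l).ncard : ℤ)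
        = (q : ℤ) ^ 2 * (A ∩ S).ncard - (q : ℤ) ^ 2 * (B ∩ S).ncard := by
      rw [← Finset.sum_sub_distrib]
      have hterm : ∀ l ∈ S.toFinset,
          ((linesMeeting F A l).ncard : ℤ) - ((linesMeeting F B l).ncard : ℤ)
          = (q : ℤ) ^ 2 * (if l ∈ A then (1 : ℤ) else 0)
            - (q : ℤ) ^ 2 * (if l ∈ B then (1 : ℤ) else 0) := by
        intro l hl
        rw [Set.mem_toFinset] at hl
        by_cases hA : l ∈ A
        · have hB : l ∉ B := fun hB => hAB l hA hB
          rw [if_pos hA, if_neg hB, hiii l hA]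
          push_cast
          ring
        · by_cases hB : l ∈ B
          · rw [if_neg hA, if_pos hB, hiv l hB]
            push_cast
            ring
          · rw [if_neg hA, if_neg hB, hii l (hSlines l hl) (by simp [hA, hB])]
            ring
      rw [Finset.sum_congr rfl hterm, Finset.sum_sub_distrib, ← Finset.mul_sum, ← Finset.mul_sum,
        Finset.sum_boole, Finset.sum_boole]
      rw [CL13.filter_card_inter, CL13.filter_card_inter]
      push_cast
      rw [Set.inter_comm S A, Set.inter_comm S B]
    set a := (A ∩ S).ncard with ha
    set b := (B ∩ S).ncard with hb
    set dA := (A \ S).ncard with hdA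
    set dB := (B \ S).ncard with hdB
    have hdisjIA : Disjoint (A ∩ S) (A \ S) := by
      rw [Set.disjoint_left]
      rintro l ⟨-, h1⟩ ⟨-, h2⟩
      exact h2 h1
    have hdisjIB : Disjoint (B ∩ S) (B \ S) := by
      rw [Set.disjoint_left]
      rintro l ⟨-, h1⟩ ⟨-, h2⟩
      exact h2 h1
    have hpartA : a + dA = A.ncard := by
      rw [ha, hdA, ← Set.ncard_union_eq hdisjIA (Set.toFinite _) (Set.toFinite _),
        Set.inter_union_diff]
    have hpartB : b + dB = B.ncard := by
      rw [hb, hdB, ← Set.ncard_union_eq hdisjIB (Set.toFinite _) (Set.toFinite _),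
        Set.inter_union_diff]
    have key : a = b := by
      have c1 : ∑ l ∈ S.toFinset, ((linesMeeting F A l).ncard : ℤ)
          = (a : ℤ) + (dA : ℤ) * ((q : ℤ) + 1) := by
        have := congrArg (Nat.cast : ℕ → ℤ) hsumA
        push_cast at this
        exact this
      have c2 : ∑ l ∈ S.toFinset, ((linesMeeting F B l).ncard : ℤ)
          = (b : ℤ) + (dB : ℤ) * ((q : ℤ) + 1) := by
        have := congrArg (Nat.cast : ℕ → ℤ) hsumB
        push_cast at this
        exact this
      have E1 : ((a : ℤ) + (dA : ℤ) * ((q : ℤ) + 1)) - ((b : ℤ) + (dB : ℤ) * ((q : ℤ) + 1))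
          = (q : ℤ) ^ 2 * a - (q : ℤ) ^ 2 * b := by
        rw [← c1, ← c2]
        exact hdiff
      have E2 : (a : ℤ) + (dA : ℤ) = (b : ℤ) + (dB : ℤ) := by
        have h3 : a + dA = b + dB := by rw [hpartA, hpartB, hsize]
        exact_mod_cast congrArg (Nat.cast : ℕ → ℤ) h3
      have hzero : ((a : ℤ) - b) * ((q : ℤ) ^ 2 + q) = 0 := by
        linear_combination (-1 : ℤ) * E1 + ((q : ℤ) + 1) * E2
      have hqpos : (0 : ℤ) < (q : ℤ) ^ 2 + q := by
        have : (2 : ℤ) ≤ (q : ℤ) := by exact_mod_cast hq2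
        nlinarith
      have : (a : ℤ) - b = 0 := by
        rcases mul_eq_zero.1 hzero with h | h
        · exact h
        · omega
      omega
    have hxL : (L ∩ S).ncard = (q ^ 2 + 1) / 2 := hL.2 S ⟨hSlines, hScard, hSdisj⟩
    have hsub : A ∩ S ⊆ L ∩ S := fun l hl => ⟨hAL hl.1, hl.2⟩
    have hEq : ((L \ A) ∪ B) ∩ S = ((L ∩ S) \ (A ∩ S)) ∪ (B ∩ S) := by
      ext l
      simp only [Set.mem_inter_iff, Set.mem_union, Set.mem_diff]
      constructor
      · rintro ⟨h1 | h1, h2⟩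
        · exact Or.inl ⟨⟨h1.1, h2⟩, fun h => h1.2 h.1⟩
        · exact Or.inr ⟨h1, h2⟩
      · rintro (⟨⟨h1, h2⟩, h3⟩ | ⟨h1, h2⟩)
        · exact ⟨Or.inl ⟨h1, fun hA' => h3 ⟨hA', h2⟩⟩, h2⟩
        · exact ⟨Or.inr h1, h2⟩
    have hdisjBL : Disjoint ((L ∩ S) \ (A ∩ S)) (B ∩ S) := by
      rw [Set.disjoint_left]
      rintro l ⟨⟨hlL, -⟩, -⟩ ⟨hlB, -⟩
      exact Set.eq_empty_iff_forall_notMem.1 hBL l ⟨hlB, hlL⟩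
    have hle : a ≤ (q ^ 2 + 1) / 2 := hxL ▸ Set.ncard_le_ncard hsub (Set.toFinite _)
    rw [hEq, Set.ncard_union_eq hdisjBL (Set.toFinite _) (Set.toFinite _),
      Set.ncard_diff hsub (Set.toFinite _), hxL, ← ha, ← hb, ← key]
    omega
end

section
/- Assume q ≡ 1 (mod 4) and let λ̄ ∈ GF(q) be a nonsquare. Then the line set L = T ∪ S satisfies A ⊆ L and B ∩ L = ∅; that is, every line of L₁' ∪ L₂' ∪ L₃ ∪ L₄' is either secant to Q_λ̄ or tangent to Q_λ̄ with all its points off Q_λ̄ in O_n, while no line of L₁ ∪ L₂ ∪ L₃' ∪ L₄ has this property. -/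
section Helpers

open Submodule Module

variable {F : Type} [Field F]

lemma Fq_smul (lam c : F) (v : Fin 4 → F) : Fq F lam (c • v) = c ^ 2 * Fq F lam v := by
  simp only [Fq, Pi.smul_apply, smul_eq_mul]; ring

lemma Fq_comb (lam s t : F) (p w : Fin 4 → F) :
    Fq F lam (s • p + t • w)
      = s ^ 2 * Fq F lam p + s * t * polarFq F lam p w + t ^ 2 * Fq F lam w := by
  rw [polarFq_eq]
  simp only [Fq, Pi.add_apply, Pi.smul_apply, smul_eq_mul]; ring

lemma Fq_split (lam : F) (v : Fin 4 → F) : Fq F lam v = Fq F 0 v + lam * (v 3) ^ 2 := by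
  simp [Fq]

lemma mem_planePi {v : Fin 4 → F} : v ∈ planePi F ↔ v 3 = 0 := Iff.rfl

lemma isPoint_span {v : Fin 4 → F} (hv : v ≠ 0) : isPoint F (Submodule.span F {v}) :=
  finrank_span_singleton hv

lemma point_eq_span {P : Submodule F (Fin 4 → F)} {p : Fin 4 → F} (hP : isPoint F P)
    (hp : p ∈ P) (hp0 : p ≠ 0) : P = Submodule.span F {p} := by
  have hle : Submodule.span F {p} ≤ P := by
    rw [Submodule.span_le, Set.singleton_subset_iff]; exact hp
  exact (Submodule.eq_of_le_of_finrank_le hle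
    (le_of_eq (hP.trans (finrank_span_singleton hp0).symm))).symm

lemma isPoint_iff_exists {P : Submodule F (Fin 4 → F)} :
    isPoint F P ↔ ∃ v, v ≠ 0 ∧ P = Submodule.span F {v} := by
  constructor
  · intro h
    have hne : P ≠ ⊥ := by
      intro hbot
      rw [isPoint, hbot] at h
      simp at h
    obtain ⟨v, hvP, hv0⟩ := Submodule.exists_mem_ne_zero_of_ne_bot hne
    exact ⟨v, hv0, point_eq_span h hvP hv0⟩
  · rintro ⟨v, hv0, rfl⟩
    exact isPoint_span hv0

lemma span_mem_quadric {lam : F} {v : Fin 4 → F} (hv : v ≠ 0) :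
    Submodule.span F {v} ∈ quadric F lam ↔ Fq F lam v = 0 := by
  constructor
  · intro ⟨_, h⟩
    exact h v (Submodule.mem_span_singleton_self v)
  · intro h
    refine ⟨isPoint_span hv, fun u hu => ?_⟩
    obtain ⟨a, rfl⟩ := Submodule.mem_span_singleton.mp hu
    rw [Fq_smul, h, mul_zero]

lemma comb_eq {p w : Fin 4 → F} (hp0 : p ≠ 0) (hw : w ∉ Submodule.span F {p})
    {s t s' t' : F} (h : s • p + t • w = s' • p + t' • w) : s = s' ∧ t = t' := by
  have key : (s - s') • p = (t' - t) • w := by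
    rw [sub_smul, sub_smul]
    rw [sub_eq_sub_iff_add_eq_add]
    linear_combination (norm := module) h
  by_cases ht : t' - t = 0
  · rw [ht, zero_smul] at key
    have hs : s - s' = 0 := by
      by_contra hs
      exact hp0 (by simpa [hs] using smul_eq_zero.mp key)
    exact ⟨sub_eq_zero.mp hs, (sub_eq_zero.mp ht).symm⟩
  · exfalso
    apply hw
    rw [Submodule.mem_span_singleton]
    exact ⟨(t' - t)⁻¹ * (s - s'), by rw [mul_smul, key, inv_smul_smul₀ ht]⟩

lemma comb_ne_zero {p w : Fin 4 → F} (hp0 : p ≠ 0) (hw : w ∉ Submodule.span F {p})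
    {s t : F} (h : ¬(s = 0 ∧ t = 0)) : s • p + t • w ≠ 0 := by
  intro h0
  have : s • p + t • w = (0 : F) • p + (0 : F) • w := by simpa using h0
  obtain ⟨hs, ht⟩ := comb_eq hp0 hw this
  exact h ⟨hs, ht⟩

lemma not_mem_span_ne_zero {p w : Fin 4 → F} (hw : w ∉ Submodule.span F {p}) : w ≠ 0 := by
  intro h; exact hw (h ▸ Submodule.zero_mem _)

lemma isLine_span_pair {p w : Fin 4 → F} (hp0 : p ≠ 0) (hw : w ∉ Submodule.span F {p}) :
    isLine F (Submodule.span F {p, w}) := by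
  have hind : LinearIndependent F ![p, w] := by
    rw [linearIndependent_fin2]
    refine ⟨not_mem_span_ne_zero hw, fun a ha => ?_⟩
    simp only [Matrix.cons_val_one, Matrix.head_cons, Matrix.cons_val_zero] at ha
    by_cases h0 : a = 0
    · exact hp0 (by simpa [h0] using ha.symm)
    · exact hw (Submodule.mem_span_singleton.mpr ⟨a⁻¹, by rw [← ha, inv_smul_smul₀ h0]⟩)
  have := finrank_span_eq_card hind
  rw [show Set.range ![p, w] = {p, w} by
    rw [Matrix.range_cons, Matrix.range_cons_empty]; rfl] at this
  simpa [isLine] using this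

lemma span_pair_eq_line {l : Submodule F (Fin 4 → F)} {p w : Fin 4 → F}
    (hl : isLine F l) (hp : p ∈ l) (hp0 : p ≠ 0) (hwl : w ∈ l)
    (hw : w ∉ Submodule.span F {p}) : l = Submodule.span F {p, w} := by
  have hle : Submodule.span F {p, w} ≤ l := by
    rw [Submodule.span_le]
    rintro x (rfl | rfl)
    · exact hp
    · exact hwl
  exact (Submodule.eq_of_le_of_finrank_le hle
    (by rw [hl]; exact (isLine_span_pair hp0 hw).ge)).symm

lemma exists_second {l : Submodule F (Fin 4 → F)} {p : Fin 4 → F}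
    (hl : isLine F l) (hp0 : p ≠ 0) : ∃ w ∈ l, w ∉ Submodule.span F {p} := by
  by_contra h
  push_neg at h
  have hle : l ≤ Submodule.span F {p} := h
  have := Submodule.finrank_mono hle
  rw [hl, finrank_span_singleton hp0] at this
  omega

lemma span_mem_qpts {lam : F} {l : Submodule F (Fin 4 → F)} {v : Fin 4 → F}
    (hv : v ≠ 0) (hvl : v ∈ l) (hFv : Fq F lam v = 0) :
    Submodule.span F {v} ∈ qpts F lam l := by
  refine ⟨(span_mem_quadric hv).mpr hFv, ?_⟩
  rw [Submodule.span_le, Set.singleton_subset_iff]; exact hvl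

lemma mem_qpts_iff {lam : F} {l P : Submodule F (Fin 4 → F)} {p w : Fin 4 → F}
    (hp0 : p ≠ 0) (hw : w ∉ Submodule.span F {p}) (hl : l = Submodule.span F {p, w}) :
    P ∈ qpts F lam l ↔ ∃ s t : F, ¬(s = 0 ∧ t = 0) ∧ Fq F lam (s • p + t • w) = 0 ∧
      P = Submodule.span F {s • p + t • w} := by
  constructor
  · rintro ⟨⟨hpt, hvan⟩, hPl⟩
    obtain ⟨v, hv0, rfl⟩ := isPoint_iff_exists.mp hpt
    have hvl : v ∈ l := hPl (Submodule.mem_span_singleton_self v)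
    rw [hl] at hvl
    obtain ⟨s, t, hst⟩ := Submodule.mem_span_pair.mp hvl
    refine ⟨s, t, ?_, ?_, by rw [hst]⟩
    · intro ⟨hs, ht⟩
      rw [hs, ht] at hst
      simp at hst
      exact hv0 hst.symm
    · rw [hst]; exact hvan v (Submodule.mem_span_singleton_self v)
  · rintro ⟨s, t, hst, hF, rfl⟩
    have hv0 : s • p + t • w ≠ 0 := comb_ne_zero hp0 hw hst
    refine ⟨(span_mem_quadric hv0).mpr hF, ?_⟩
    rw [Submodule.span_le, Set.singleton_subset_iff, hl]
    exact Submodule.mem_span_pair.mpr ⟨s, t, rfl⟩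

end Helpers

section Squares

variable {F : Type} [Field F]

lemma not_isSquare_ne_zero {a : F} (ha : ¬IsSquare a) : a ≠ 0 := by
  rintro rfl; exact ha ⟨0, by ring⟩

lemma isSquare_of_mul_sq {a b : F} (hb : b ≠ 0) (h : IsSquare (a * b ^ 2)) : IsSquare a := by
  obtain ⟨r, hr⟩ := h
  exact ⟨r * b⁻¹, by field_simp; linear_combination hr⟩

lemma isSquare_mul_sq {a b : F} (h : IsSquare a) : IsSquare (a * b ^ 2) := by
  obtain ⟨r, hr⟩ := h
  exact ⟨r * b, by rw [hr]; ring⟩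

lemma isSquare_mul_of_not_not [Fintype F] {a b : F} (ha : ¬IsSquare a) (hb : ¬IsSquare b) :
    IsSquare (a * b) := by
  classical
  have ha' : quadraticChar F a = -1 := quadraticChar_neg_one_iff_not_isSquare.mpr ha
  have hb' : quadraticChar F b = -1 := quadraticChar_neg_one_iff_not_isSquare.mpr hb
  have h1 : quadraticChar F (a * b) = 1 := by rw [map_mul, ha', hb']; ring
  exact (quadraticChar_one_iff_isSquare
    (mul_ne_zero (not_isSquare_ne_zero ha) (not_isSquare_ne_zero hb))).mp h1

end Squares

section Card

variable {F : Type} [Field F] [Fintype F]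

lemma neg_one_square {q : ℕ} (hq : Fintype.card F = q) (hq4 : q % 4 = 1) :
    IsSquare (-1 : F) := by
  rw [FiniteField.isSquare_neg_one_iff, hq, hq4]
  omega

lemma two_ne_zero'' {q : ℕ} (hq : Fintype.card F = q) (hq4 : q % 4 = 1) : (2 : F) ≠ 0 := by
  intro h2
  have hchar : ringChar F = 2 := by
    have : ((2 : ℕ) : F) = 0 := by exact_mod_cast h2
    have hdvd : ringChar F ∣ 2 := (ringChar.spec F 2).mp this
    rcases (Nat.dvd_prime Nat.prime_two).mp hdvd with h | h
    · exact absurd h CharP.ringChar_ne_one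
    · exact h
  have := FiniteField.even_card_iff_char_two.mp hchar
  rw [hq] at this
  omega

lemma submodule_finite : Finite (Submodule F (Fin 4 → F)) :=
  Finite.of_injective (fun W : Submodule F (Fin 4 → F) => (W : Set (Fin 4 → F)))
    SetLike.coe_injective

end Card

section Geom

open Submodule Module

variable {F : Type} [Field F]

lemma Fq_of_pi {lam : F} {v : Fin 4 → F} (h : v 3 = 0) : Fq F lam v = Fq F 0 v := by
  rw [Fq_split lam v, h]; ring

lemma conic_eq_qpts (lam : F) {l : Submodule F (Fin 4 → F)} (hl : l ≤ planePi F) :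
    {P | P ∈ conicC F ∧ P ≤ l} = qpts F lam l := by
  ext P
  simp only [Set.mem_setOf_eq, conicC, qpts, quadric]
  constructor
  · rintro ⟨⟨⟨hpt, hvan⟩, _⟩, hPl⟩
    refine ⟨⟨hpt, fun v hv => ?_⟩, hPl⟩
    rw [Fq_of_pi (mem_planePi.mp (hl (hPl hv)))]
    exact hvan v hv
  · rintro ⟨⟨hpt, hvan⟩, hPl⟩
    refine ⟨⟨⟨hpt, fun v hv => ?_⟩, le_trans hPl hl⟩, hPl⟩
    rw [← Fq_of_pi (lam := lam) (mem_planePi.mp (hl (hPl hv)))]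
    exact hvan v hv

lemma tangent_structure {l : Submodule F (Fin 4 → F)} (hl : isLine F l)
    (hpi : l ≤ planePi F) (h1 : ({P | P ∈ conicC F ∧ P ≤ l}).ncard = 1) :
    ∃ p w : Fin 4 → F, p ≠ 0 ∧ w ∉ Submodule.span F {p} ∧ l = Submodule.span F {p, w} ∧
      Fq F 0 p = 0 ∧ polarFq F 0 p w = 0 ∧ Fq F 0 w ≠ 0 ∧ IsSquare (-(Fq F 0 w)) := by
  rw [conic_eq_qpts 0 hpi] at h1
  obtain ⟨P0, hP0⟩ := Set.ncard_eq_one.mp h1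
  have hP0mem : P0 ∈ qpts F 0 l := by rw [hP0]; exact rfl
  obtain ⟨⟨hpt, hvan⟩, hP0l⟩ := hP0mem
  obtain ⟨p, hp0, hPspan⟩ := isPoint_iff_exists.mp hpt
  have hFp : Fq F 0 p = 0 := hvan p (hPspan ▸ Submodule.mem_span_singleton_self p)
  have hpl : p ∈ l := hP0l (hPspan ▸ Submodule.mem_span_singleton_self p)
  obtain ⟨w, hwl, hw⟩ := exists_second hl hp0
  have hlspan := span_pair_eq_line hl hpl hp0 hwl hw
  have huniq : ∀ v : Fin 4 → F, v ≠ 0 → v ∈ l → Fq F 0 v = 0 →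
      Submodule.span F {v} = Submodule.span F {p} := by
    intro v hv0 hvl hFv
    have h1 : Submodule.span F {v} ∈ qpts F 0 l := span_mem_qpts hv0 hvl hFv
    rw [hP0] at h1
    rw [Set.mem_singleton_iff.mp h1, hPspan]
  have hb : polarFq F 0 p w = 0 := by
    by_contra hb
    set b := polarFq F 0 p w with hbdef
    set c := Fq F 0 w with hcdef
    set u := (-c * b⁻¹) • p + (1:F) • w with hu
    have hu0 : u ≠ 0 := comb_ne_zero hp0 hw (by simp)
    have hul : u ∈ l := by
      rw [hlspan]; exact Submodule.mem_span_pair.mpr ⟨_, _, rfl⟩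
    have hFu : Fq F 0 u = 0 := by
      rw [hu, Fq_comb, hFp, ← hbdef, ← hcdef]
      field_simp
      ring
    have hspan := huniq u hu0 hul hFu
    have humem : u ∈ Submodule.span F {p} := hspan ▸ Submodule.mem_span_singleton_self u
    obtain ⟨a, ha⟩ := Submodule.mem_span_singleton.mp humem
    have ha' : a • p + (0:F) • w = (-c * b⁻¹) • p + (1:F) • w := by
      rw [zero_smul, add_zero, ha]
    obtain ⟨-, h01⟩ := comb_eq hp0 hw ha'
    exact one_ne_zero h01.symm
  have hc : Fq F 0 w ≠ 0 := by
    intro hc0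
    have hspan := huniq w (not_mem_span_ne_zero hw) hwl hc0
    exact hw (hspan ▸ Submodule.mem_span_singleton_self w)
  refine ⟨p, w, hp0, hw, hlspan, hFp, hb, hc, ?_⟩
  have hp3 : p 3 = 0 := mem_planePi.mp (hpi hpl)
  have hw3 : w 3 = 0 := mem_planePi.mp (hpi hwl)
  have hFp' : p 0 * p 2 - p 1 ^ 2 = 0 := by
    have h := hFp; simp only [Fq, hp3] at h; linear_combination h 
  have hpol' : p 0 * w 2 + p 2 * w 0 - 2 * (p 1 * w 1) = 0 := by
    have h := hb; rw [polarFq_eq] at h; rw [hp3] at h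
    linear_combination h
  by_cases hpz : p 0 = 0
  · have hp1 : p 1 = 0 := by
      have : p 1 ^ 2 = 0 := by rw [hpz] at hFp'; linear_combination -hFp'
      exact pow_eq_zero_iff (two_ne_zero) |>.mp this
    have hp2 : p 2 ≠ 0 := by
      intro hp2
      apply hp0
      funext i
      fin_cases i <;> simp [hpz, hp1, hp2, hp3]
    have hw0 : w 0 = 0 := by
      rw [hpz, hp1] at hpol'
      have : p 2 * w 0 = 0 := by linear_combination hpol'
      rcases mul_eq_zero.mp this with h | h
      · exact absurd h hp2
      · exact h
    exact ⟨w 1, by simp only [Fq, hw3, hw0]; ring⟩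
  · refine ⟨(p 0 * w 1 - p 1 * w 0) * (p 0)⁻¹, ?_⟩
    have key : -(Fq F 0 w) * (p 0) ^ 2 = (p 0 * w 1 - p 1 * w 0) ^ 2 := by
      simp only [Fq, hw3]
      linear_combination (-(p 0 * w 0)) * hpol' + (w 0 ^ 2) * hFp'
    field_simp
    linear_combination key

lemma sq_of_mem_tangent {m : Submodule F (Fin 4 → F)} (hm : m ∈ lineL1 F)
    {v : Fin 4 → F} (hv : v ∈ m) : IsSquare (-(Fq F 0 v)) := by
  obtain ⟨hline, hpi, h1⟩ := hm
  obtain ⟨p, w, hp0, hw, hspan, hFp, hpol, hc, hsq⟩ := tangent_structure hline hpi h1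
  rw [hspan] at hv
  obtain ⟨s, t, rfl⟩ := Submodule.mem_span_pair.mp hv
  rw [Fq_comb, hFp, hpol]
  obtain ⟨r, hr⟩ := hsq
  exact ⟨t * r, by linear_combination (t:F) ^ 2 * hr⟩

lemma setE_sq {P : Submodule F (Fin 4 → F)} (hP : P ∈ setE F) {p : Fin 4 → F}
    (hp : p ∈ P) (hp0 : p ≠ 0) : Fq F 0 p ≠ 0 ∧ IsSquare (-(Fq F 0 p)) := by
  obtain ⟨hpt, hppi, hnc, h2⟩ := hP
  obtain ⟨m, m', hne, hset⟩ := Set.ncard_eq_two.mp h2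
  have hmmem : m ∈ {m | m ∈ lineL1 F ∧ P ≤ m} := by rw [hset]; left; rfl
  obtain ⟨hm1, hPm⟩ := hmmem
  refine ⟨?_, sq_of_mem_tangent hm1 (hPm hp)⟩
  intro hF0
  apply hnc
  refine ⟨?_, hppi⟩
  rw [point_eq_span hpt hp hp0]
  exact (span_mem_quadric hp0).mpr hF0

lemma setI_nonsq [Fintype F] (hi : IsSquare (-1 : F)) {P : Submodule F (Fin 4 → F)}
    (hP : P ∈ setI F) {p : Fin 4 → F} (hp : p ∈ P) (hp0 : p ≠ 0) :
    ¬ IsSquare (Fq F 0 p) := by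
  obtain ⟨hpt, hppi, hnc, h0⟩ := hP
  intro hsq
  have hPs := point_eq_span hpt hp hp0
  have hp3 : p 3 = 0 := mem_planePi.mp (hppi hp)
  have hγ : Fq F 0 p ≠ 0 := by
    intro h
    exact hnc ⟨by rw [hPs]; exact (span_mem_quadric hp0).mpr h, hppi⟩
  obtain ⟨d, hd⟩ : IsSquare (-(Fq F 0 p)) := by
    obtain ⟨i, hi'⟩ := hi
    obtain ⟨g, hg⟩ := hsq
    exact ⟨i * g, by linear_combination -hg + (g:F) ^ 2 * hi'⟩
  -- construct a tangent point p₀ of the conic with polarFq 0 p₀ p = 0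
  obtain ⟨p₀, hp₀0, hFp₀, hpolp₀, hp₀3⟩ :
      ∃ p₀ : Fin 4 → F, p₀ ≠ 0 ∧ Fq F 0 p₀ = 0 ∧ polarFq F 0 p₀ p = 0 ∧ p₀ 3 = 0 := by
    by_cases hpz : p 0 = 0
    · refine ⟨![0,0,1,0], ?_, ?_, ?_, rfl⟩
      · intro h
        have := congrFun h 2
        simp at this
      · have e0 : (![0,0,1,0] : Fin 4 → F) 0 = 0 := rfl
        have e1 : (![0,0,1,0] : Fin 4 → F) 1 = 0 := rfl
        have e3 : (![0,0,1,0] : Fin 4 → F) 3 = 0 := rfl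
        simp only [Fq, e0, e1, e3]; ring
      · rw [polarFq_eq]
        have e0 : (![0,0,1,0] : Fin 4 → F) 0 = 0 := rfl
        have e1 : (![0,0,1,0] : Fin 4 → F) 1 = 0 := rfl
        have e2 : (![0,0,1,0] : Fin 4 → F) 2 = 1 := rfl
        have e3 : (![0,0,1,0] : Fin 4 → F) 3 = 0 := rfl
        rw [e0, e1, e2, e3]
        linear_combination hpz
    · refine ⟨![p 0 ^ 2, p 0 * (p 1 + d), (p 1 + d) ^ 2, 0], ?_, ?_, ?_, rfl⟩
      · intro h
        have h0 := congrFun h 0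
        have e0 : (![p 0 ^ 2, p 0 * (p 1 + d), (p 1 + d) ^ 2, 0] : Fin 4 → F) 0 = p 0 ^ 2 := rfl
        rw [e0] at h0
        simp only [Pi.zero_apply] at h0
        exact hpz (pow_eq_zero_iff two_ne_zero |>.mp h0)
      · have e0 : (![p 0 ^ 2, p 0 * (p 1 + d), (p 1 + d) ^ 2, 0] : Fin 4 → F) 0 = p 0 ^ 2 := rfl
        have e1 : (![p 0 ^ 2, p 0 * (p 1 + d), (p 1 + d) ^ 2, 0] : Fin 4 → F) 1
            = p 0 * (p 1 + d) := rfl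
        have e2 : (![p 0 ^ 2, p 0 * (p 1 + d), (p 1 + d) ^ 2, 0] : Fin 4 → F) 2
            = (p 1 + d) ^ 2 := rfl
        have e3 : (![p 0 ^ 2, p 0 * (p 1 + d), (p 1 + d) ^ 2, 0] : Fin 4 → F) 3 = 0 := rfl
        simp only [Fq, e0, e1, e2, e3]; ring
      · rw [polarFq_eq]
        have hd' : -(Fq F 0 p) = d * d := hd
        simp only [Fq] at hd'
        have e0 : (![p 0 ^ 2, p 0 * (p 1 + d), (p 1 + d) ^ 2, 0] : Fin 4 → F) 0 = p 0 ^ 2 := rfl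
        have e1 : (![p 0 ^ 2, p 0 * (p 1 + d), (p 1 + d) ^ 2, 0] : Fin 4 → F) 1
            = p 0 * (p 1 + d) := rfl
        have e2 : (![p 0 ^ 2, p 0 * (p 1 + d), (p 1 + d) ^ 2, 0] : Fin 4 → F) 2
            = (p 1 + d) ^ 2 := rfl
        have e3 : (![p 0 ^ 2, p 0 * (p 1 + d), (p 1 + d) ^ 2, 0] : Fin 4 → F) 3 = 0 := rfl
        rw [e0, e1, e2, e3]
        linear_combination (-(p 0)) * hd'
  have hpnotin : p ∉ Submodule.span F {p₀} := by
    intro hmem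
    obtain ⟨a, ha⟩ := Submodule.mem_span_singleton.mp hmem
    apply hγ
    rw [← ha, Fq_smul, hFp₀, mul_zero]
  set m := Submodule.span F {p₀, p} with hm
  have hline : isLine F m := isLine_span_pair hp₀0 hpnotin
  have hmpi : m ≤ planePi F := by
    rw [hm, Submodule.span_le]
    rintro x (rfl | rfl)
    · exact mem_planePi.mpr hp₀3
    · exact mem_planePi.mpr hp3
  have hqpts : qpts F 0 m = {Submodule.span F {p₀}} := by
    ext P'
    rw [mem_qpts_iff hp₀0 hpnotin hm]
    constructor
    · rintro ⟨s, t, hst, hF, rfl⟩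
      rw [Fq_comb, hFp₀, hpolp₀] at hF
      have ht2 : t ^ 2 * Fq F 0 p = 0 := by linear_combination hF
      have ht : t = 0 := by
        rcases mul_eq_zero.mp ht2 with h | h
        · exact pow_eq_zero_iff two_ne_zero |>.mp h
        · exact absurd h hγ
      subst ht
      have hs : s ≠ 0 := fun h => hst ⟨h, rfl⟩
      rw [Set.mem_singleton_iff]
      have hvec : s • p₀ + (0:F) • p = s • p₀ := by simp
      rw [hvec]
      exact Submodule.span_singleton_smul_eq (IsUnit.mk0 s hs) p₀
    · intro h
      rw [Set.mem_singleton_iff] at h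
      refine ⟨1, 0, by simp, ?_, ?_⟩
      · rw [Fq_comb, hFp₀, hpolp₀]; ring
      · rw [h]
        have hvec : (1:F) • p₀ + (0:F) • p = p₀ := by simp
        rw [hvec]
  have hconic : ({P' | P' ∈ conicC F ∧ P' ≤ m}).ncard = 1 := by
    rw [conic_eq_qpts 0 hmpi, hqpts, Set.ncard_singleton]
  have hmmem : m ∈ {m' | m' ∈ lineL1 F ∧ P ≤ m'} := by
    refine ⟨⟨hline, hmpi, hconic⟩, ?_⟩
    rw [hPs, Submodule.span_le, Set.singleton_subset_iff]
    exact Submodule.subset_span (by right; rfl)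
  haveI := submodule_finite (F := F)
  rw [Set.ncard_eq_zero (Set.toFinite _)] at h0
  rw [h0] at hmmem
  exact hmmem

end Geom

section Cases1

open Submodule Module

variable {F : Type} [Field F]

lemma e4_ne_zero : (Pi.single 3 1 : Fin 4 → F) ≠ 0 := by
  intro h
  have := congrFun h 3
  simp [Pi.single_eq_same] at this

lemma Fq_e4 (lam : F) : Fq F lam (Pi.single 3 1) = lam := by
  have e0 : (Pi.single 3 1 : Fin 4 → F) 0 = 0 := Pi.single_eq_of_ne (by decide) 1
  have e1 : (Pi.single 3 1 : Fin 4 → F) 1 = 0 := Pi.single_eq_of_ne (by decide) 1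
  have e3 : (Pi.single 3 1 : Fin 4 → F) 3 = 1 := Pi.single_eq_same 3 1
  simp only [Fq, e0, e1, e3]; ring

lemma polar_split (lam : F) (u v : Fin 4 → F) :
    polarFq F lam u v = polarFq F 0 u v + lam * (2 * (u 3 * v 3)) := by
  rw [polarFq_eq, polarFq_eq]; ring

lemma polar_e4 (lam : F) {p : Fin 4 → F} (hp3 : p 3 = 0) :
    polarFq F lam (Pi.single 3 1) p = 0 := by
  have e0 : (Pi.single 3 1 : Fin 4 → F) 0 = 0 := Pi.single_eq_of_ne (by decide) 1
  have e1 : (Pi.single 3 1 : Fin 4 → F) 1 = 0 := Pi.single_eq_of_ne (by decide) 1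
  have e2 : (Pi.single 3 1 : Fin 4 → F) 2 = 0 := Pi.single_eq_of_ne (by decide) 1
  rw [polarFq_eq, e0, e1, e2, hp3]; ring

lemma caseL3 (lam : F) {l : Submodule F (Fin 4 → F)} (h : l ∈ lineL3 F) : l ∈ setS F lam := by
  obtain ⟨hline, hpi, h2⟩ := h
  refine ⟨hline, ?_⟩
  rw [secantTo, ← conic_eq_qpts lam hpi]
  exact h2

lemma caseL4' (lam : F) {l : Submodule F (Fin 4 → F)} (h : l ∈ lineL4' F) : l ∈ setS F lam :=
  ⟨h.1, h.2.2 lam⟩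

lemma caseL1' {lam : F} (hlam : ¬IsSquare lam) {l : Submodule F (Fin 4 → F)}
    (h : l ∈ lineL1' F) : l ∈ setT F lam := by
  obtain ⟨hline, hU4, hvan⟩ := h
  have he4 : (Pi.single 3 1 : Fin 4 → F) ∈ l := hU4 (Submodule.mem_span_singleton_self _)
  obtain ⟨w, hwl, hw⟩ := exists_second hline (e4_ne_zero (F := F))
  have hlspan := span_pair_eq_line hline he4 e4_ne_zero hwl hw
  set u : Fin 4 → F := w - (w 3) • (Pi.single 3 1 : Fin 4 → F) with hu
  have hu3 : u 3 = 0 := by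
    rw [hu]
    simp [Pi.single_eq_same]
  have hu0 : u ≠ 0 := by
    intro h0
    apply hw
    rw [Submodule.mem_span_singleton]
    exact ⟨w 3, by rw [eq_comm, ← sub_eq_zero]; rw [hu] at h0; linear_combination (norm := module) h0⟩
  have hul : u ∈ l := Submodule.sub_mem _ hwl (Submodule.smul_mem _ _ he4)
  have hFl : ∀ v ∈ l, Fq F lam v = lam * (v 3) ^ 2 := fun v hv => by
    rw [Fq_split, hvan v hv, zero_add]
  have hqpts : qpts F lam l = {Submodule.span F {u}} := by
    ext P
    constructor
    · rintro ⟨⟨hpt, hv⟩, hPl⟩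
      obtain ⟨g, hg0, rfl⟩ := isPoint_iff_exists.mp hpt
      have hgl : g ∈ l := hPl (Submodule.mem_span_singleton_self g)
      have hg3 : g 3 = 0 := by
        have hz := hv g (Submodule.mem_span_singleton_self g)
        rw [hFl g hgl] at hz
        rcases mul_eq_zero.mp hz with h' | h'
        · exact absurd h' (not_isSquare_ne_zero hlam)
        · exact pow_eq_zero_iff two_ne_zero |>.mp h'
      obtain ⟨s, t, hst⟩ := Submodule.mem_span_pair.mp (hlspan ▸ hgl)
      have h3 : s + t * w 3 = 0 := by
        have hc := congrFun hst 3
        simp only [Pi.add_apply, Pi.smul_apply, Pi.single_eq_same, smul_eq_mul, mul_one] at hc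
        rw [hg3] at hc
        exact hc
      have hs : s = -(t * w 3) := by linear_combination h3
      have hgu : g = t • u := by
        rw [← hst, hs, hu]
        module
      have ht0 : t ≠ 0 := by
        rintro rfl
        rw [zero_smul] at hgu
        exact hg0 hgu
      rw [Set.mem_singleton_iff, hgu]
      exact Submodule.span_singleton_smul_eq (IsUnit.mk0 t ht0) u
    · intro hP
      rw [Set.mem_singleton_iff] at hP
      rw [hP]
      exact span_mem_qpts hu0 hul (by rw [hFl u hul, hu3]; ring)
  refine ⟨hline, by rw [tangentTo, hqpts, Set.ncard_singleton], ?_⟩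
  intro P hpt hPl hPq
  obtain ⟨g, hg0, rfl⟩ := isPoint_iff_exists.mp hpt
  have hgl : g ∈ l := hPl (Submodule.mem_span_singleton_self g)
  have hg3 : g 3 ≠ 0 := by
    intro h3
    exact hPq ((span_mem_quadric hg0).mpr (by rw [hFl g hgl, h3]; ring))
  refine ⟨isPoint_span hg0, ?_⟩
  intro v hv hv0 hsq
  obtain ⟨cv, rfl⟩ := Submodule.mem_span_singleton.mp hv
  have hc0 : cv ≠ 0 := by rintro rfl; simp at hv0
  apply hlam
  have hval : Fq F lam (cv • g) = lam * (cv * g 3) ^ 2 := by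
    rw [Fq_smul, hFl g hgl]; ring
  rw [hval] at hsq
  exact isSquare_of_mul_sq (mul_ne_zero hc0 hg3) hsq

lemma U4_line_setup {l : Submodule F (Fin 4 → F)} (hline : isLine F l) (hU4 : pointU4 F ≤ l)
    (hpt : isPoint F (l ⊓ planePi F)) :
    ∃ p : Fin 4 → F, p ≠ 0 ∧ p 3 = 0 ∧ p ∈ l ∧ p ∈ (l ⊓ planePi F) ∧
      p ∉ Submodule.span F {(Pi.single 3 1 : Fin 4 → F)} ∧
      l = Submodule.span F {(Pi.single 3 1 : Fin 4 → F), p} := by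
  obtain ⟨p, hp0, hPs⟩ := isPoint_iff_exists.mp hpt
  have hpmem : p ∈ l ⊓ planePi F := hPs ▸ Submodule.mem_span_singleton_self p
  have hp3 : p 3 = 0 := mem_planePi.mp hpmem.2
  have hpnot : p ∉ Submodule.span F {(Pi.single 3 1 : Fin 4 → F)} := by
    intro hmem
    obtain ⟨a, ha⟩ := Submodule.mem_span_singleton.mp hmem
    apply hp0
    have ha3 := congrFun ha 3
    simp only [Pi.smul_apply, Pi.single_eq_same, smul_eq_mul, mul_one] at ha3
    rw [hp3] at ha3
    rw [← ha, ha3, zero_smul]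
  exact ⟨p, hp0, hp3, hpmem.1, hpmem, hpnot,
    span_pair_eq_line hline (hU4 (Submodule.mem_span_singleton_self _)) e4_ne_zero hpmem.1 hpnot⟩

end Cases1

section Cases2

open Submodule Module

variable {F : Type} [Field F] [Fintype F]

set_option linter.unusedSectionVars false

lemma caseL2' {lam : F} (hlam : ¬IsSquare lam) (hi : IsSquare (-1 : F)) (h2 : (2 : F) ≠ 0)
    {l : Submodule F (Fin 4 → F)} (h : l ∈ lineL2' F) : l ∈ setS F lam := by
  obtain ⟨hline, hU4, hI⟩ := h
  obtain ⟨p, hp0, hp3, hpl, hpmem, hpnot, hlspan⟩ := U4_line_setup hline hU4 hI.1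
  have hγns : ¬IsSquare (Fq F 0 p) := setI_nonsq hi hI hpmem hp0
  have hγ0 : Fq F 0 p ≠ 0 := not_isSquare_ne_zero hγns
  have hlam0 : lam ≠ 0 := not_isSquare_ne_zero hlam
  obtain ⟨u, hu⟩ := isSquare_mul_of_not_not hlam hγns
  obtain ⟨i, hi'⟩ := hi
  have hlr : lam * (i * u * lam⁻¹) ^ 2 = -(Fq F 0 p) := by
    field_simp
    linear_combination (-(i^2)) * hu + (-(lam * Fq F 0 p)) * hi'
  set r : F := i * u * lam⁻¹ with hr
  have hr0 : r ≠ 0 := by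
    intro h0
    rw [h0] at hlr
    apply hγ0
    have : -(Fq F 0 p) = 0 := by rw [← hlr]; ring
    linear_combination -this
  have hmem : ∀ s : F, Fq F lam (s • (Pi.single 3 1 : Fin 4 → F) + (1:F) • p)
      = lam * s ^ 2 + Fq F 0 p := by
    intro s
    rw [Fq_comb, Fq_e4, polar_e4 lam hp3, Fq_of_pi hp3]
    ring
  have hqpts : qpts F lam l =
      {Submodule.span F {r • (Pi.single 3 1 : Fin 4 → F) + (1:F) • p},
       Submodule.span F {(-r) • (Pi.single 3 1 : Fin 4 → F) + (1:F) • p}} := by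
    ext P
    rw [mem_qpts_iff e4_ne_zero hpnot hlspan]
    constructor
    · rintro ⟨s, t, hst, hF, rfl⟩
      rw [Fq_comb, Fq_e4, polar_e4 lam hp3, Fq_of_pi hp3] at hF
      have ht0 : t ≠ 0 := by
        rintro rfl
        have hs2 : lam * s ^ 2 = 0 := by linear_combination hF
        rcases mul_eq_zero.mp hs2 with h' | h'
        · exact hlam0 h'
        · exact hst ⟨pow_eq_zero_iff two_ne_zero |>.mp h', rfl⟩
      have hfact : lam * (s - r * t) * (s + r * t) = 0 := by
        linear_combination hF - t ^ 2 * hlr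
      rcases mul_eq_zero.mp hfact with h' | h'
      · rcases mul_eq_zero.mp h' with h'' | h''
        · exact absurd h'' hlam0
        · -- s = r t
          left
          have hvec : s • (Pi.single 3 1 : Fin 4 → F) + t • p
              = t • (r • (Pi.single 3 1 : Fin 4 → F) + (1:F) • p) := by
            have hs : s = r * t := by linear_combination h''
            rw [hs]; module
          rw [hvec]
          exact Submodule.span_singleton_smul_eq (IsUnit.mk0 t ht0) _
      · -- s = -r t
        right
        have hvec : s • (Pi.single 3 1 : Fin 4 → F) + t • p
            = t • ((-r) • (Pi.single 3 1 : Fin 4 → F) + (1:F) • p) := by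
          have hs : s = -r * t := by linear_combination h'
          rw [hs]; module
        rw [hvec]
        exact Submodule.span_singleton_smul_eq (IsUnit.mk0 t ht0) _
    · rintro (rfl | rfl)
      · exact ⟨r, 1, by simp, by rw [hmem r]; linear_combination hlr, rfl⟩
      · exact ⟨-r, 1, by simp, by rw [hmem (-r)]; linear_combination hlr, rfl⟩
  have hne : Submodule.span F {r • (Pi.single 3 1 : Fin 4 → F) + (1:F) • p}
      ≠ Submodule.span F {(-r) • (Pi.single 3 1 : Fin 4 → F) + (1:F) • p} := by
    intro heq
    have hmem1 : r • (Pi.single 3 1 : Fin 4 → F) + (1:F) • p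
        ∈ Submodule.span F {(-r) • (Pi.single 3 1 : Fin 4 → F) + (1:F) • p} :=
      heq ▸ Submodule.mem_span_singleton_self _
    obtain ⟨a, ha⟩ := Submodule.mem_span_singleton.mp hmem1
    have ha' : (a * (-r)) • (Pi.single 3 1 : Fin 4 → F) + a • p
        = r • (Pi.single 3 1 : Fin 4 → F) + (1:F) • p := by
      rw [← ha]; module
    obtain ⟨h1', h2'⟩ := comb_eq e4_ne_zero hpnot ha'
    apply hr0
    have : (2 : F) * r = 0 := by rw [h2'] at h1'; linear_combination -h1'
    rcases mul_eq_zero.mp this with h' | h'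
    · exact absurd h' h2
    · exact h'
  exact ⟨hline, by rw [secantTo, hqpts, Set.ncard_pair hne]⟩

lemma caseL3' {lam : F} (hlam : ¬IsSquare lam) (hi : IsSquare (-1 : F))
    {l : Submodule F (Fin 4 → F)} (h : l ∈ lineL3' F) :
    l ∉ setT F lam ∪ setS F lam := by
  obtain ⟨hline, hU4, hE⟩ := h
  obtain ⟨p, hp0, hp3, hpl, hpmem, hpnot, hlspan⟩ := U4_line_setup hline hU4 hE.1
  obtain ⟨hγ0, hγsq⟩ := setE_sq hE hpmem hp0
  have hlam0 : lam ≠ 0 := not_isSquare_ne_zero hlam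
  obtain ⟨m, hm⟩ := hγsq
  have hempty : qpts F lam l = ∅ := by
    ext P
    simp only [Set.mem_empty_iff_false, iff_false]
    rw [mem_qpts_iff e4_ne_zero hpnot hlspan]
    rintro ⟨s, t, hst, hF, -⟩
    rw [Fq_comb, Fq_e4, polar_e4 lam hp3, Fq_of_pi hp3] at hF
    have ht0 : t ≠ 0 := by
      rintro rfl
      have hs2 : lam * s ^ 2 = 0 := by linear_combination hF
      rcases mul_eq_zero.mp hs2 with h' | h'
      · exact hlam0 h'
      · exact hst ⟨pow_eq_zero_iff two_ne_zero |>.mp h', rfl⟩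
    have hs0 : s ≠ 0 := by
      rintro rfl
      apply hγ0
      have ht2 : t ^ 2 * Fq F 0 p = 0 := by linear_combination hF
      rcases mul_eq_zero.mp ht2 with h' | h'
      · exact absurd (pow_eq_zero_iff two_ne_zero |>.mp h') ht0
      · exact h'
    apply hlam
    have hkey : lam * s ^ 2 = (m * t) * (m * t) := by
      linear_combination hF + t ^ 2 * hm
    exact isSquare_of_mul_sq hs0 ⟨m * t, by linear_combination hkey⟩
  rintro (⟨-, ht, -⟩ | ⟨-, hs⟩)
  · rw [tangentTo, hempty, Set.ncard_empty] at ht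
    omega
  · rw [secantTo, hempty, Set.ncard_empty] at hs
    omega

lemma caseL1 {lam : F} (hi : IsSquare (-1 : F)) {l : Submodule F (Fin 4 → F)}
    (h : l ∈ lineL1 F) : l ∉ setT F lam ∪ setS F lam := by
  obtain ⟨hline, hpi, h1⟩ := h
  obtain ⟨p, w, hp0, hw, hspan, hFp, hpol, hc, hsq⟩ := tangent_structure hline hpi h1
  have hqn : (qpts F lam l).ncard = 1 := by rw [← conic_eq_qpts lam hpi]; exact h1
  rintro (⟨-, -, hall⟩ | ⟨-, hs⟩)
  · have hwl : w ∈ l := by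
      rw [hspan]
      exact Submodule.subset_span (by right; rfl)
    have hw3 : w 3 = 0 := mem_planePi.mp (hpi hwl)
    have hw0 : w ≠ 0 := not_mem_span_ne_zero hw
    have hP := hall (Submodule.span F {w}) (isPoint_span hw0)
      (by rw [Submodule.span_le, Set.singleton_subset_iff]; exact hwl)
      (by
        intro hq
        apply hc
        rw [← Fq_of_pi (lam := lam) hw3]
        exact (span_mem_quadric hw0).mp hq)
    obtain ⟨-, hOn⟩ := hP
    apply hOn w (Submodule.mem_span_singleton_self w) hw0
    rw [Fq_of_pi hw3]
    obtain ⟨i, hi'⟩ := hi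
    obtain ⟨m, hm⟩ := hsq
    exact ⟨i * m, by linear_combination -hm + (m : F) ^ 2 * hi'⟩
  · rw [secantTo, hqn] at hs
    omega

lemma caseL2 (lam : F) {l : Submodule F (Fin 4 → F)} (h : l ∈ lineL2 F) :
    l ∉ setT F lam ∪ setS F lam := by
  obtain ⟨hline, hpi, h0⟩ := h
  have hqn : (qpts F lam l).ncard = 0 := by rw [← conic_eq_qpts lam hpi]; exact h0
  rintro (⟨-, ht, -⟩ | ⟨-, hs⟩)
  · rw [tangentTo, hqn] at ht; omega
  · rw [secantTo, hqn] at hs; omega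

lemma caseL4 {lam : F} (hlam : ¬IsSquare lam) (hi : IsSquare (-1 : F)) (h2 : (2 : F) ≠ 0)
    {l : Submodule F (Fin 4 → F)} (h : l ∈ lineL4 F) :
    l ∉ setT F lam ∪ setS F lam := by
  obtain ⟨hline, hU4, htan, hE⟩ := h
  obtain ⟨p, hp0, hPs⟩ := isPoint_iff_exists.mp hE.1
  have hpmem : p ∈ l ⊓ planePi F := hPs ▸ Submodule.mem_span_singleton_self p
  have hp3 : p 3 = 0 := mem_planePi.mp hpmem.2
  have hpl : p ∈ l := hpmem.1
  obtain ⟨hγ0, hγsq⟩ := setE_sq hE hpmem hp0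
  obtain ⟨w₀, hw₀l, hw₀⟩ := exists_second hline hp0
  have hw₀3 : w₀ 3 ≠ 0 := by
    intro h3
    have hlpi : l ≤ planePi F := by
      rw [span_pair_eq_line hline hpl hp0 hw₀l hw₀, Submodule.span_le]
      rintro x (rfl | rfl)
      · exact mem_planePi.mpr hp3
      · exact mem_planePi.mpr h3
    have hinf : l ⊓ planePi F = l := inf_eq_left.mpr hlpi
    have h1' := hE.1
    rw [hinf] at h1'
    rw [isPoint] at h1'
    rw [isLine] at hline
    omega
  set w : Fin 4 → F := (w₀ 3)⁻¹ • w₀ with hwdef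
  have hwl : w ∈ l := Submodule.smul_mem _ _ hw₀l
  have hwns : w ∉ Submodule.span F {p} := by
    intro hm
    apply hw₀
    rw [Submodule.mem_span_singleton] at hm ⊢
    obtain ⟨a, ha⟩ := hm
    exact ⟨w₀ 3 * a, by rw [mul_smul, ha, hwdef, smul_inv_smul₀ hw₀3]⟩
  have hw3 : w 3 = 1 := by
    rw [hwdef]
    simp only [Pi.smul_apply, smul_eq_mul]
    exact inv_mul_cancel₀ hw₀3
  have hlspan := span_pair_eq_line hline hpl hp0 hwl hwns
  have hFqlamp : Fq F lam p = Fq F 0 p := Fq_of_pi hp3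
  have hpolp : polarFq F lam p w = polarFq F 0 p w := by
    rw [polar_split, hp3]; ring
  have hFqlamw : Fq F lam w = Fq F 0 w + lam := by rw [Fq_split, hw3]; ring
  -- discriminant of the restriction of F₀ vanishes
  have hD : (polarFq F 0 p w) ^ 2 - 4 * Fq F 0 p * Fq F 0 w = 0 := by
    by_contra hD
    rw [tangentTo] at htan
    obtain ⟨P0, hP0⟩ := Set.ncard_eq_one.mp htan
    by_cases hsqD : IsSquare ((polarFq F 0 p w) ^ 2 - 4 * Fq F 0 p * Fq F 0 w)
    · obtain ⟨d, hd⟩ := hsqD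
      have hd0 : d ≠ 0 := by
        rintro rfl
        exact hD (by rw [hd]; ring)
      have h2γ : (2 * Fq F 0 p) ≠ 0 := mul_ne_zero h2 hγ0
      have hv₁ : Fq F 0 ((-polarFq F 0 p w + d) • p + (2 * Fq F 0 p) • w) = 0 := by
        rw [Fq_comb]
        linear_combination (-(Fq F 0 p)) * hd
      have hv₂ : Fq F 0 ((-polarFq F 0 p w - d) • p + (2 * Fq F 0 p) • w) = 0 := by
        rw [Fq_comb]
        linear_combination (-(Fq F 0 p)) * hd
      have hm₁ : Submodule.span F {(-polarFq F 0 p w + d) • p + (2 * Fq F 0 p) • w}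
          ∈ qpts F 0 l :=
        span_mem_qpts (comb_ne_zero hp0 hwns (fun hc => h2γ hc.2)) (by
          rw [hlspan]; exact Submodule.mem_span_pair.mpr ⟨_, _, rfl⟩) hv₁
      have hm₂ : Submodule.span F {(-polarFq F 0 p w - d) • p + (2 * Fq F 0 p) • w}
          ∈ qpts F 0 l :=
        span_mem_qpts (comb_ne_zero hp0 hwns (fun hc => h2γ hc.2)) (by
          rw [hlspan]; exact Submodule.mem_span_pair.mpr ⟨_, _, rfl⟩) hv₂
      rw [hP0, Set.mem_singleton_iff] at hm₁ hm₂
      have heq := hm₁.trans hm₂.symm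
      have hmem1 : (-polarFq F 0 p w + d) • p + (2 * Fq F 0 p) • w
          ∈ Submodule.span F {(-polarFq F 0 p w - d) • p + (2 * Fq F 0 p) • w} :=
        heq ▸ Submodule.mem_span_singleton_self _
      obtain ⟨a, ha⟩ := Submodule.mem_span_singleton.mp hmem1
      have ha' : (a * (-polarFq F 0 p w - d)) • p + (a * (2 * Fq F 0 p)) • w
          = (-polarFq F 0 p w + d) • p + (2 * Fq F 0 p) • w := by
        rw [← ha]; module
      obtain ⟨h1', h2'⟩ := comb_eq hp0 hwns ha'
      have ha1 : a = 1 := by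
        rcases mul_eq_zero.mp (show (a - 1) * (2 * Fq F 0 p) = 0 by linear_combination h2') with
          h' | h'
        · linear_combination h'
        · exact absurd h' h2γ
      rw [ha1, one_mul] at h1'
      apply hd0
      have h2d : 2 * d = 0 := by linear_combination -h1'
      rcases mul_eq_zero.mp h2d with h' | h'
      · exact absurd h' h2
      · exact h'
    · exfalso
      apply hsqD
      have hP0m : P0 ∈ qpts F 0 l := by rw [hP0]; rfl
      rw [mem_qpts_iff hp0 hwns hlspan] at hP0m
      obtain ⟨s, t, hst, hF, -⟩ := hP0m
      rw [Fq_comb] at hF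
      have ht0 : t ≠ 0 := by
        rintro rfl
        have hs2 : s ^ 2 * Fq F 0 p = 0 := by linear_combination hF
        rcases mul_eq_zero.mp hs2 with h' | h'
        · exact hst ⟨pow_eq_zero_iff two_ne_zero |>.mp h', rfl⟩
        · exact hγ0 h'
      refine isSquare_of_mul_sq ht0 ⟨2 * Fq F 0 p * s + polarFq F 0 p w * t, ?_⟩
      linear_combination (-4 * Fq F 0 p) * hF
  -- now Q_lam has no points on l
  have hempty : qpts F lam l = ∅ := by
    ext P
    simp only [Set.mem_empty_iff_false, iff_false]
    rw [mem_qpts_iff hp0 hwns hlspan]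
    rintro ⟨s, t, hst, hF, -⟩
    rw [Fq_comb, hFqlamp, hpolp, hFqlamw] at hF
    have ht0 : t ≠ 0 := by
      rintro rfl
      have hs2 : s ^ 2 * Fq F 0 p = 0 := by linear_combination hF
      rcases mul_eq_zero.mp hs2 with h' | h'
      · exact hst ⟨pow_eq_zero_iff two_ne_zero |>.mp h', rfl⟩
      · exact hγ0 h'
    have hsq4 : (2 * Fq F 0 p * s + polarFq F 0 p w * t) ^ 2
        = lam * (-(4 * Fq F 0 p)) * t ^ 2 := by
      linear_combination (4 * Fq F 0 p) * hF + t ^ 2 * hD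
    obtain ⟨m, hm⟩ := hγsq
    have hm0 : m ≠ 0 := by
      rintro rfl
      apply hγ0
      have hz : -(Fq F 0 p) = 0 := by rw [hm]; ring
      linear_combination -hz
    apply hlam
    refine isSquare_of_mul_sq (b := 2 * m * t) (mul_ne_zero (mul_ne_zero h2 hm0) ht0) ?_
    exact ⟨2 * Fq F 0 p * s + polarFq F 0 p w * t,
      by linear_combination -hsq4 - 4 * lam * t ^ 2 * hm⟩
  rintro (⟨-, ht, -⟩ | ⟨-, hs⟩)
  · rw [tangentTo, hempty, Set.ncard_empty] at ht; omega
  · rw [secantTo, hempty, Set.ncard_empty] at hs; omega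

end Cases2

theorem statement_16 {F : Type} [Field F] [Fintype F] (q : ℕ)
    (hq : Fintype.card F = q) (hq4 : q % 4 = 1)
    (lam : F) (hlam : ¬ IsSquare lam) :
    setA F ⊆ setT F lam ∪ setS F lam ∧
    setB F ∩ (setT F lam ∪ setS F lam) = ∅ := by
  have hi : IsSquare (-1 : F) := neg_one_square hq hq4
  have h2 : (2 : F) ≠ 0 := two_ne_zero'' hq hq4
  constructor
  · intro l hl
    simp only [setA, Set.mem_union] at hl
    simp only [Set.mem_union]
    rcases hl with ((h | h) | h) | h
    · exact Or.inl (caseL1' hlam h)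
    · exact Or.inr (caseL2' hlam hi h2 h)
    · exact Or.inr (caseL3 lam h)
    · exact Or.inr (caseL4' lam h)
  · rw [Set.eq_empty_iff_forall_notMem]
    rintro l ⟨hB, hTS⟩
    simp only [setB, Set.mem_union] at hB
    rcases hB with ((h | h) | h) | h
    · exact caseL1 hi h hTS
    · exact caseL2 lam h hTS
    · exact caseL3' hlam hi h hTS
    · exact caseL4 hlam hi h2 h hTS
end
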